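/- arXiv:0802.0841 — 3 statements merged into one kernel-verified Lean document; each statement's English description precedes it below -/
import Mathlib

section
/- Let a ∈ R be a power series such that a(x₁,0,…,0) ≠ 0 in k[[x₁]], and let r be the order of a(x₁,0,…,0) in k[[x₁]] (the least exponent with nonzero coefficient). Then there exists an invertible power series w ∈ R such that I_a ∼ I_{r,w}. Moreover, if s ≥ 2t−1, then w may be chosen to be an invertible power series in k[[x₁]] only (i.e. w ∈ k[[x₁]] with nonzero constant term). -/
noncomputable section

open MvPowerSeries

/-- The maximal ideal `(x₁, …, x_h)` of the power series ring. -/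
def nIdeal (k : Type*) [Field k] (h : ℕ) : Ideal (MvPowerSeries (Fin h) k) :=
  Ideal.span (Set.range (X : Fin h → MvPowerSeries (Fin h) k))

/-- The ideal generated (in terms of a system of generators `y`) by
`y i * y j` (`i < j`, `(i,j) ≠ (0,1)`), `y j ^ 2 - y 0 ^ s` (`j ≥ 2`),
`y 1 ^ 2 - y 0 ^ (p+1) * y 1 - w * y 0 ^ (s - t + 1)` and `y 0 ^ t * y 1`. -/
def Iy (k : Type*) [Field k] (n s t p : ℕ) (w : MvPowerSeries (Fin (n + 2)) k)
    (y : Fin (n + 2) → MvPowerSeries (Fin (n + 2)) k) :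
    Ideal (MvPowerSeries (Fin (n + 2)) k) :=
  Ideal.span
    ({f | ∃ i j : Fin (n + 2), i < j ∧ (i, j) ≠ (0, 1) ∧ f = y i * y j} ∪
     {f | ∃ j : Fin (n + 2), 2 ≤ (j : ℕ) ∧ f = y j ^ 2 - y 0 ^ s} ∪
     {y 1 ^ 2 - y 0 ^ (p + 1) * y 1 - w * y 0 ^ (s - t + 1), y 0 ^ t * y 1})

/-- The ideal `I_{p,z}`. -/
def Ipz (k : Type*) [Field k] (n s t p : ℕ) (z : MvPowerSeries (Fin (n + 2)) k) :
    Ideal (MvPowerSeries (Fin (n + 2)) k) :=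
  Iy k n s t p z X

/-- The ideal `I_a`. -/
def Ia (k : Type*) [Field k] (n s t : ℕ) (a : MvPowerSeries (Fin (n + 2)) k) :
    Ideal (MvPowerSeries (Fin (n + 2)) k) :=
  Ideal.span
    ({f | ∃ i j : Fin (n + 2), i < j ∧ (i, j) ≠ (0, 1) ∧ f = X i * X j} ∪
     {f | ∃ j : Fin (n + 2), 2 ≤ (j : ℕ) ∧ f = X j ^ 2 - X 0 ^ s} ∪
     {X 1 ^ 2 - a * X 0 * X 1 - X 0 ^ (s - t + 1), X 0 ^ t * X 1})

/-- Two ideals are isomorphic iff the quotient `k`-algebras are isomorphic. -/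
def IdealIso (k : Type*) [Field k] {h : ℕ} (I J : Ideal (MvPowerSeries (Fin h) k)) : Prop :=
  Nonempty ((MvPowerSeries (Fin h) k ⧸ I) ≃ₐ[k] (MvPowerSeries (Fin h) k ⧸ J))

/-- The ideal `(x₂, …, x_h)`. -/
def offIdeal (k : Type*) [Field k] (n : ℕ) : Ideal (MvPowerSeries (Fin (n + 2)) k) :=
  Ideal.span {f | ∃ i : Fin (n + 2), i ≠ 0 ∧ f = X i}

end


noncomputable section StmtAux
open MvPowerSeries Finset

variable {k : Type*} [Field k] {n : ℕ}

/-- Monomials. -/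
abbrev Mo (n : ℕ) := Fin (n + 2) →₀ ℕ

/-- The ring. -/
abbrev Rg (k : Type*) [Field k] (n : ℕ) := MvPowerSeries (Fin (n + 2)) k

/-- `X 1`-degree-`j` component. -/
def Dc (j : ℕ) (f : Rg k n) : Rg k n := fun m => if m 1 = j then coeff m f else 0

lemma coeff_Dc (j : ℕ) (f : Rg k n) (m : Mo n) :
    coeff m (Dc j f) = if m 1 = j then coeff m f else 0 := rfl

/-- concentrated in `X 1`-degree `j`. -/
def Conc (j : ℕ) (f : Rg k n) : Prop := ∀ m : Mo n, m 1 ≠ j → coeff m f = 0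

lemma conc_Dc (j : ℕ) (f : Rg k n) : Conc j (Dc j f) := by
  intro m hm
  rw [coeff_Dc, if_neg hm]

lemma Dc_of_conc {j : ℕ} {f : Rg k n} (h : Conc j f) : Dc j f = f := by
  apply MvPowerSeries.ext; intro m
  rw [coeff_Dc]
  by_cases hm : m 1 = j
  · rw [if_pos hm]
  · rw [if_neg hm, h m hm]

lemma Dc_of_conc_ne {i j : ℕ} {f : Rg k n} (h : Conc j f) (hij : i ≠ j) : Dc i f = 0 := by
  apply MvPowerSeries.ext; intro m
  rw [coeff_Dc, map_zero]
  by_cases hm : m 1 = i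
  · rw [if_pos hm, h m (by rw [hm]; exact hij)]
  · rw [if_neg hm]

lemma conc_mul {j₁ j₂ : ℕ} {f g : Rg k n} (hf : Conc j₁ f) (hg : Conc j₂ g) :
    Conc (j₁ + j₂) (f * g) := by
  intro m hm
  rw [coeff_mul]
  apply Finset.sum_eq_zero
  rintro ⟨p, q⟩ hpq
  rw [Finset.HasAntidiagonal.mem_antidiagonal] at hpq
  by_cases hp : p 1 = j₁
  · have hq : q 1 ≠ j₂ := by
      intro hq
      apply hm
      rw [← hpq, Finsupp.add_apply, hp, hq]
    rw [hg q hq, mul_zero]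
  · rw [hf p hp, zero_mul]

lemma snd_apply_le {μ : Mo n} {p : Mo n × Mo n} (hp : p ∈ Finset.HasAntidiagonal.antidiagonal μ) (i : Fin (n + 2)) :
    p.2 i ≤ μ i := by
  rw [Finset.HasAntidiagonal.mem_antidiagonal] at hp
  rw [← hp, Finsupp.add_apply]
  exact Nat.le_add_left _ _

lemma snd_le {μ : Mo n} {p : Mo n × Mo n} (hp : p ∈ Finset.HasAntidiagonal.antidiagonal μ) : p.2 ≤ μ :=
  Finsupp.le_def.2 fun i => snd_apply_le hp i

lemma coeff_mul_conc {v f : Rg k n} {j : ℕ} (hf : Conc j f) {μ : Mo n} (hμ : μ 1 < j) :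
    coeff μ (v ^ j * f) = 0 := by
  rw [coeff_mul]
  apply Finset.sum_eq_zero
  rintro ⟨p, q⟩ hpq
  have : q 1 ≠ j := Nat.ne_of_lt (lt_of_le_of_lt (snd_apply_le hpq 1) hμ)
  rw [hf q this, mul_zero]

/-- Substitution `X 1 ↦ v * X 1`. -/
def psi (v : Rg k n) (f : Rg k n) : Rg k n :=
  fun μ => ∑ j ∈ Finset.range (μ 1 + 1), coeff μ (v ^ j * Dc j f)

lemma coeff_psi (v f : Rg k n) (μ : Mo n) :
    coeff μ (psi v f) = ∑ j ∈ Finset.range (μ 1 + 1), coeff μ (v ^ j * Dc j f) := rfl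

lemma coeff_psi_eq (v f : Rg k n) {μ : Mo n} {N : ℕ} (hN : μ 1 < N) :
    coeff μ (psi v f) = ∑ j ∈ Finset.range N, coeff μ (v ^ j * Dc j f) := by
  rw [coeff_psi]
  apply Finset.sum_subset
  · rw [Finset.range_subset_range]; exact hN
  · intro j _ hj
    rw [Finset.mem_range, not_lt] at hj
    exact coeff_mul_conc (conc_Dc j f) (Nat.lt_of_succ_le hj)

lemma psi_add (v f g : Rg k n) : psi v (f + g) = psi v f + psi v g := by
  apply MvPowerSeries.ext; intro μ
  rw [map_add, coeff_psi, coeff_psi, coeff_psi, ← Finset.sum_add_distrib]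
  apply Finset.sum_congr rfl
  intro j _
  have : Dc j (f + g) = Dc j f + Dc j g := by
    apply MvPowerSeries.ext; intro m
    simp only [coeff_Dc, map_add]
    split <;> simp
  rw [this, mul_add, map_add]

lemma psi_of_conc {v f : Rg k n} {j : ℕ} (h : Conc j f) : psi v f = v ^ j * f := by
  apply MvPowerSeries.ext; intro μ
  rw [coeff_psi_eq v f (Nat.lt_succ_of_le (Nat.le_max_left _ _) : μ 1 < max (μ 1) j + 1)]
  rw [Finset.sum_eq_single j]
  · rw [Dc_of_conc h]
  · intro i _ hij
    rw [Dc_of_conc_ne h hij, mul_zero, map_zero]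
  · intro hj
    exfalso
    exact hj (Finset.mem_range.2 (Nat.lt_succ_of_le (Nat.le_max_right _ _)))

lemma psi_of_conc0 {v f : Rg k n} (h : Conc 0 f) : psi v f = f := by
  rw [psi_of_conc h, pow_zero, one_mul]

lemma conc0_one : Conc 0 (1 : Rg k n) := by
  intro m hm
  rw [coeff_one, if_neg]
  intro h; apply hm; rw [h]; simp

lemma conc0_C (c : k) : Conc 0 (C c : Rg k n) := by
  intro m hm
  rw [coeff_C, if_neg]
  intro h; apply hm; rw [h]; simp

lemma conc0_X {i : Fin (n + 2)} (hi : i ≠ 1) : Conc 0 (X i : Rg k n) := by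
  intro m hm
  rw [coeff_X, if_neg]
  intro h; apply hm; rw [h, Finsupp.single_apply, if_neg hi]

lemma conc1_X1 : Conc 1 (X 1 : Rg k n) := by
  intro m hm
  rw [coeff_X, if_neg]
  intro h; apply hm; rw [h, Finsupp.single_apply, if_pos rfl]

lemma Dc_mul (j : ℕ) (f g : Rg k n) :
    Dc j (f * g) = ∑ p ∈ Finset.HasAntidiagonal.antidiagonal j, Dc p.1 f * Dc p.2 g := by
  apply MvPowerSeries.ext; intro m
  rw [map_sum]
  simp only [coeff_Dc, coeff_mul]
  rw [Finset.sum_comm]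
  by_cases hm : m 1 = j
  · rw [if_pos hm]
    apply Finset.sum_congr rfl
    rintro ⟨p, q⟩ hpq
    have hpq' : p 1 + q 1 = j := by
      rw [Finset.HasAntidiagonal.mem_antidiagonal] at hpq
      rw [← hm, ← hpq, Finsupp.add_apply]
    symm
    calc (∑ x ∈ Finset.HasAntidiagonal.antidiagonal j,
            (if p 1 = x.1 then coeff p f else 0) * (if q 1 = x.2 then coeff q g else 0))
        = ∑ x ∈ Finset.HasAntidiagonal.antidiagonal j,
            (if x = (p 1, q 1) then coeff p f * coeff q g else 0) := by
          apply Finset.sum_congr rfl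
          rintro ⟨x1, x2⟩ _
          rw [ite_zero_mul_ite_zero]
          congr 1
          simp only [Prod.mk.injEq, eq_iff_iff]
          constructor
          · rintro ⟨h1, h2⟩; exact ⟨h1.symm, h2.symm⟩
          · rintro ⟨h1, h2⟩; exact ⟨h1.symm, h2.symm⟩
      _ = coeff p f * coeff q g := by
          rw [Finset.sum_ite_eq']
          rw [if_pos (Finset.HasAntidiagonal.mem_antidiagonal.2 hpq')]
  · rw [if_neg hm]
    symm
    apply Finset.sum_eq_zero
    rintro ⟨p, q⟩ hpq
    apply Finset.sum_eq_zero
    rintro ⟨x1, x2⟩ hx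
    rw [Finset.HasAntidiagonal.mem_antidiagonal] at hx hpq
    rw [ite_zero_mul_ite_zero, if_neg]
    rintro ⟨h1, h2⟩
    apply hm
    rw [← hpq, Finsupp.add_apply, h1, h2, hx]

lemma psi_mul (v f g : Rg k n) : psi v (f * g) = psi v f * psi v g := by
  apply MvPowerSeries.ext; intro μ
  set N := μ 1 + 1 with hN
  have hμN : μ 1 < N := Nat.lt_succ_self _
  -- RHS
  have hR : coeff μ (psi v f * psi v g) =
      ∑ j₁ ∈ Finset.range N, ∑ j₂ ∈ Finset.range N,
        coeff μ (v ^ (j₁ + j₂) * (Dc j₁ f * Dc j₂ g)) := by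
    rw [coeff_mul]
    have : ∀ p ∈ Finset.HasAntidiagonal.antidiagonal μ,
        coeff p.1 (psi v f) * coeff p.2 (psi v g) =
        ∑ j₁ ∈ Finset.range N, ∑ j₂ ∈ Finset.range N,
          coeff p.1 (v ^ j₁ * Dc j₁ f) * coeff p.2 (v ^ j₂ * Dc j₂ g) := by
      rintro ⟨p, q⟩ hpq
      have h' : (p + q) 1 = μ 1 := by rw [Finset.HasAntidiagonal.mem_antidiagonal.1 hpq]
      rw [Finsupp.add_apply] at h'
      have hp1 : p 1 < N := by omega
      have hq1 : q 1 < N := by omega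
      rw [coeff_psi_eq v f hp1, coeff_psi_eq v g hq1, Finset.sum_mul_sum]
    rw [Finset.sum_congr rfl this, Finset.sum_comm]
    apply Finset.sum_congr rfl
    intro j₁ _
    rw [Finset.sum_comm]
    apply Finset.sum_congr rfl
    intro j₂ _
    rw [← coeff_mul]
    congr 1
    ring
  -- LHS
  rw [hR, coeff_psi_eq v (f * g) hμN]
  have hL : ∀ j, coeff μ (v ^ j * Dc j (f * g)) =
      ∑ p ∈ Finset.HasAntidiagonal.antidiagonal j, coeff μ (v ^ (p.1 + p.2) * (Dc p.1 f * Dc p.2 g)) := by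
    intro j
    rw [Dc_mul, Finset.mul_sum, map_sum]
    apply Finset.sum_congr rfl
    rintro ⟨j₁, j₂⟩ hj
    rw [Finset.HasAntidiagonal.mem_antidiagonal] at hj
    rw [hj]
  rw [Finset.sum_congr rfl fun j _ => hL j]
  -- triangle to square
  rw [← Finset.sum_biUnion]
  · rw [← Finset.sum_product']
    apply Finset.sum_subset
    · intro p hp
      rw [Finset.mem_biUnion] at hp
      obtain ⟨j, hj, hpj⟩ := hp
      rw [Finset.mem_range] at hj
      rw [Finset.HasAntidiagonal.mem_antidiagonal] at hpj
      rw [Finset.mem_product, Finset.mem_range, Finset.mem_range]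
      omega
    · intro p _ hp
      have : μ 1 < p.1 + p.2 := by
        by_contra hcon
        apply hp
        rw [Finset.mem_biUnion]
        exact ⟨p.1 + p.2, Finset.mem_range.2 (by omega), Finset.HasAntidiagonal.mem_antidiagonal.2 rfl⟩
      exact coeff_mul_conc (conc_mul (conc_Dc p.1 f) (conc_Dc p.2 g)) this
  · intro j₁ _ j₂ _ hj
    apply Finset.disjoint_left.2
    intro p hp1 hp2
    rw [Finset.HasAntidiagonal.mem_antidiagonal] at hp1 hp2
    exact hj (by omega)

/-- `psi` as an algebra homomorphism. -/
def psiHom (v : Rg k n) : Rg k n →ₐ[k] Rg k n where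
  toFun := psi v
  map_one' := psi_of_conc0 conc0_one
  map_mul' := psi_mul v
  map_zero' := psi_of_conc0 (fun m _ => map_zero _)
  map_add' := psi_add v
  commutes' := fun c => by
    rw [← c_eq_algebraMap]
    exact psi_of_conc0 (conc0_C c)

lemma psiHom_apply (v f : Rg k n) : psiHom v f = psi v f := rfl

lemma psi_sub (v f g : Rg k n) : psi v (f - g) = psi v f - psi v g :=
  map_sub (psiHom v) f g

/-- total degree of a monomial -/
def deg (m : Mo n) : ℕ := ∑ i, m i

lemma deg_mono {m μ : Mo n} (h : m ≤ μ) : deg m ≤ deg μ :=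
  Finset.sum_le_sum fun i _ => Finsupp.le_def.1 h i

lemma deg_strict {m μ : Mo n} (h : m ≤ μ) (hne : m ≠ μ) : deg m < deg μ := by
  obtain ⟨i, hi⟩ : ∃ i, m i ≠ μ i := by
    by_contra hcon
    push_neg at hcon
    exact hne (Finsupp.ext hcon)
  exact Finset.sum_lt_sum (fun i _ => Finsupp.le_def.1 h i)
    ⟨i, Finset.mem_univ i, lt_of_le_of_ne (Finsupp.le_def.1 h i) hi⟩

lemma psi_coeff_zero_of (v f : Rg k n) (μ : Mo n) (h : ∀ m, m ≤ μ → coeff m f = 0) :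
    coeff μ (psi v f) = 0 := by
  rw [coeff_psi]
  apply Finset.sum_eq_zero
  intro j _
  rw [coeff_mul]
  apply Finset.sum_eq_zero
  rintro ⟨p, q⟩ hpq
  rw [coeff_Dc, h q (snd_le hpq)]
  simp

lemma psi_triangular (v f : Rg k n) (μ : Mo n)
    (h : ∀ m, m ≤ μ → m ≠ μ → coeff m f = 0) :
    coeff μ (psi v f) = (constantCoeff v) ^ (μ 1) * coeff μ f := by
  rw [coeff_psi, Finset.sum_eq_single (μ 1)]
  · rw [coeff_mul, Finset.sum_eq_single ((0 : Mo n), μ)]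
    · rw [coeff_Dc, if_pos rfl, coeff_zero_eq_constantCoeff, map_pow]
    · rintro ⟨p, q⟩ hpq hne
      by_cases hq : q = μ
      · exfalso
        apply hne
        have hp : p = 0 := by
          have := Finset.HasAntidiagonal.mem_antidiagonal.1 hpq
          rw [hq] at this
          exact add_eq_right.1 this
        rw [hp, hq]
      · rw [coeff_Dc, h q (snd_le hpq) hq]
        simp
    · intro hmem
      exact absurd (Finset.HasAntidiagonal.mem_antidiagonal.2 (zero_add μ)) hmem
  · intro j _ hj
    rw [coeff_mul]
    apply Finset.sum_eq_zero
    rintro ⟨p, q⟩ hpq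
    rw [coeff_Dc]
    by_cases hq : q = μ
    · rw [if_neg (by rw [hq]; exact fun hh => hj hh.symm)]
      simp
    · rw [h q (snd_le hpq) hq]
      simp
  · intro h'
    exact absurd (Finset.mem_range.2 (Nat.lt_succ_self _)) h'

lemma psi_eq_zero_imp {v : Rg k n} (hv : constantCoeff v ≠ 0) {f : Rg k n}
    (hf : psi v f = 0) : f = 0 := by
  have key : ∀ Dd : ℕ, ∀ μ : Mo n, deg μ = Dd → coeff μ f = 0 := by
    intro Dd
    induction Dd using Nat.strong_induction_on with
    | _ Dd ih =>
      intro μ hμ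
      have h0 : ∀ m, m ≤ μ → m ≠ μ → coeff m f = 0 := fun m hm hne =>
        ih (deg m) (hμ ▸ deg_strict hm hne) m rfl
      have htr := psi_triangular v f μ h0
      rw [hf, map_zero] at htr
      rcases mul_eq_zero.1 htr.symm with h | h
      · exact absurd h (pow_ne_zero _ hv)
      · exact h
  apply MvPowerSeries.ext
  intro μ
  rw [map_zero]
  exact key (deg μ) μ rfl

lemma psi_injective {v : Rg k n} (hv : constantCoeff v ≠ 0) :
    Function.Injective (psi v) := by
  intro f g h
  have h2 : psi v (f - g) = 0 := by rw [psi_sub, h, sub_self]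
  have := psi_eq_zero_imp hv h2
  exact sub_eq_zero.1 this

/-- build a power series from a coefficient function -/
def mk (F : Mo n → k) : Rg k n := F

lemma coeff_mk (F : Mo n → k) (μ : Mo n) : coeff μ (mk F) = F μ := rfl

/-- successive approximations to a `psi`-preimage of `g` -/
def approx (v g : Rg k n) (c0i : k) : ℕ → Rg k n
  | 0 => 0
  | (N + 1) => approx v g c0i N +
      mk (fun μ => if deg μ = N then
        c0i ^ (μ 1) * (coeff μ g - coeff μ (psi v (approx v g c0i N))) else 0)

lemma approx_succ (v g : Rg k n) (c0i : k) (N : ℕ) :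
    approx v g c0i (N + 1) = approx v g c0i N +
      mk (fun μ => if deg μ = N then
        c0i ^ (μ 1) * (coeff μ g - coeff μ (psi v (approx v g c0i N))) else 0) := by
  simp only [approx]

lemma coeff_approx_succ (v g : Rg k n) (c0i : k) (N : ℕ) (μ : Mo n) :
    coeff μ (approx v g c0i (N + 1)) = coeff μ (approx v g c0i N) +
      (if deg μ = N then
        c0i ^ (μ 1) * (coeff μ g - coeff μ (psi v (approx v g c0i N))) else 0) := by
  rw [approx_succ, map_add, coeff_mk]

lemma approx_supp (v g : Rg k n) (c0i : k) :
    ∀ N μ, N ≤ deg μ → coeff μ (approx v g c0i N) = 0 := by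
  intro N
  induction N with
  | zero => intro μ _; exact map_zero _
  | succ N ih =>
    intro μ hμ
    rw [coeff_approx_succ, ih μ (by omega), if_neg (by omega), add_zero]

lemma approx_stab (v g : Rg k n) (c0i : k) :
    ∀ M N, N ≤ M → ∀ μ : Mo n, deg μ < N →
      coeff μ (approx v g c0i M) = coeff μ (approx v g c0i N) := by
  intro M
  induction M with
  | zero => intro N hN μ _; interval_cases N; rfl
  | succ M ih =>
    intro N hN μ hμ
    rcases Nat.eq_or_lt_of_le hN with h | h
    · rw [h]
    · have hNM : N ≤ M := by omega
      rw [coeff_approx_succ, if_neg (by omega), add_zero]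
      exact ih N hNM μ hμ

lemma approx_correct {v : Rg k n} (hv : constantCoeff v ≠ 0) (g : Rg k n) :
    ∀ N μ, deg μ < N →
      coeff μ (psi v (approx v g (constantCoeff v)⁻¹ N)) = coeff μ g := by
  set c0i := (constantCoeff v)⁻¹ with hc0i
  intro N
  induction N with
  | zero => intro μ hμ; omega
  | succ N ih =>
    intro μ hμ
    have hdelta := approx_succ v g c0i N
    set dl : Rg k n := mk (fun ν => if deg ν = N then
          c0i ^ (ν 1) * (coeff ν g - coeff ν (psi v (approx v g c0i N))) else 0) with hdl
    have hcdl : ∀ ν : Mo n, coeff ν dl = if deg ν = N then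
          c0i ^ (ν 1) * (coeff ν g - coeff ν (psi v (approx v g c0i N))) else 0 := fun ν => rfl
    rw [hdelta, psi_add, map_add]
    by_cases hcase : deg μ < N
    · rw [ih μ hcase, psi_coeff_zero_of v dl μ (fun m hm => by
        rw [hcdl, if_neg (by have := deg_mono hm; omega)]), add_zero]
    · have hdeg : deg μ = N := by omega
      rw [psi_triangular v dl μ (fun m hm hne => by
        rw [hcdl, if_neg (by have := deg_strict hm hne; omega)])]
      rw [hcdl, if_pos hdeg]
      have : (constantCoeff v) ^ μ 1 * (c0i ^ (μ 1) *
          (coeff μ g - coeff μ (psi v (approx v g c0i N)))) =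
          coeff μ g - coeff μ (psi v (approx v g c0i N)) := by
        rw [← mul_assoc, ← mul_pow, mul_inv_cancel₀ hv, one_pow, one_mul]
      rw [this]
      ring

lemma psi_surjective {v : Rg k n} (hv : constantCoeff v ≠ 0) :
    Function.Surjective (psi v) := by
  intro g
  set c0i := (constantCoeff v)⁻¹ with hc0i
  set f : Rg k n := mk (fun μ => coeff μ (approx v g c0i (deg μ + 1))) with hf
  have hcf : ∀ μ : Mo n, coeff μ f = coeff μ (approx v g c0i (deg μ + 1)) := fun μ => rfl
  refine ⟨f, ?_⟩
  apply MvPowerSeries.ext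
  intro μ
  have hagree : ∀ m : Mo n, m ≤ μ → coeff m (f - approx v g c0i (deg μ + 1)) = 0 := by
    intro m hm
    rw [map_sub, hcf]
    rw [approx_stab v g c0i (deg μ + 1) (deg m + 1) (by have := deg_mono hm; omega) m (by omega)]
    exact sub_self _
  have h1 : coeff μ (psi v f) = coeff μ (psi v (approx v g c0i (deg μ + 1))) := by
    have := psi_coeff_zero_of v _ μ hagree
    rw [psi_sub, map_sub] at this
    exact sub_eq_zero.1 this
  rw [h1, approx_correct hv g (deg μ + 1) μ (by omega)]

lemma coeff_Xpow_mul (i : Fin (n + 2)) (r : ℕ) (h : Rg k n) (m : Mo n) :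
    coeff m ((X i : Rg k n) ^ r * h) =
      if Finsupp.single i r ≤ m then coeff (m - Finsupp.single i r) h else 0 := by
  classical
  rw [coeff_mul]
  by_cases hle : Finsupp.single i r ≤ m
  · rw [if_pos hle, Finset.sum_eq_single (Finsupp.single i r, m - Finsupp.single i r)]
    · rw [coeff_X_pow, if_pos rfl, one_mul]
    · rintro ⟨p, q⟩ hpq hne
      rw [coeff_X_pow]
      by_cases hp : p = Finsupp.single i r
      · exfalso
        apply hne
        rw [Finset.HasAntidiagonal.mem_antidiagonal] at hpq
        dsimp only at hpq
        subst hp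
        have hq : q = m - Finsupp.single i r := by
          ext j
          have h2 := Finsupp.ext_iff.1 hpq j
          rw [Finsupp.add_apply] at h2
          rw [Finsupp.tsub_apply]
          omega
        rw [hq]
      · rw [if_neg hp, zero_mul]
    · intro hmem
      exfalso
      apply hmem
      rw [Finset.HasAntidiagonal.mem_antidiagonal]
      show Finsupp.single i r + (m - Finsupp.single i r) = m
      ext j
      rw [Finsupp.add_apply, Finsupp.tsub_apply]
      have := Finsupp.le_def.1 hle j
      omega
  · rw [if_neg hle]
    apply Finset.sum_eq_zero
    rintro ⟨p, q⟩ hpq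
    rw [coeff_X_pow]
    by_cases hp : p = Finsupp.single i r
    · exfalso
      apply hle
      rw [Finset.HasAntidiagonal.mem_antidiagonal] at hpq
      rw [← hpq, hp]
      exact le_self_add
    · rw [if_neg hp, zero_mul]

/-- supported only on the variable `X 0` -/
def s0 (m : Mo n) : Prop := ∀ i, i ≠ 0 → m i = 0

lemma s0_zero : s0 (0 : Mo n) := fun _ _ => rfl

lemma s0_sub_single_apply (m : Mo n) (j : ℕ) :
    ∀ i : Fin (n + 2), i ≠ 0 → (m - Finsupp.single (0 : Fin (n + 2)) j) i = m i := by
  intro i hi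
  rw [Finsupp.tsub_apply, Finsupp.single_apply, if_neg (fun h => hi h.symm), Nat.sub_zero]

lemma s0_sub_single (m : Mo n) (j : ℕ) : s0 (m - Finsupp.single 0 j) ↔ s0 m := by
  constructor
  · intro h i hi
    rw [← s0_sub_single_apply m j i hi]
    exact h i hi
  · intro h i hi
    rw [s0_sub_single_apply m j i hi]
    exact h i hi

open Classical in
/-- the part of a power series supported on `X 0` only -/
def piX (f : Rg k n) : Rg k n := mk (fun m => if s0 m then coeff m f else 0)

open Classical in
lemma coeff_piX (f : Rg k n) (m : Mo n) :
    coeff m (piX f) = if s0 m then coeff m f else 0 := rfl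

open Classical in
/-- the series `piX a / X 0 ^ r` -/
def eps (a : Rg k n) (r : ℕ) : Rg k n :=
  mk (fun m => if s0 m then coeff (m + Finsupp.single 0 r) a else 0)

open Classical in
lemma coeff_eps (a : Rg k n) (r : ℕ) (m : Mo n) :
    coeff m (eps a r) = if s0 m then coeff (m + Finsupp.single 0 r) a else 0 := rfl

lemma constantCoeff_eps (a : Rg k n) (r : ℕ) :
    constantCoeff (eps a r) = coeff (Finsupp.single 0 r) a := by
  rw [← coeff_zero_eq_constantCoeff_apply, coeff_eps, if_pos s0_zero, zero_add]

lemma X0_piX_eq (a : Rg k n) (r : ℕ)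
    (hrmin : ∀ i < r, coeff (Finsupp.single (0 : Fin (n + 2)) i) a = 0) :
    (X 0 : Rg k n) * piX a = eps a r * X (0 : Fin (n + 2)) ^ (r + 1) := by
  apply MvPowerSeries.ext
  intro m
  rw [show (X (0 : Fin (n + 2)) : Rg k n) * piX a = X (0 : Fin (n + 2)) ^ 1 * piX a by
    rw [pow_one], coeff_Xpow_mul, mul_comm (eps a r), coeff_Xpow_mul]
  by_cases hs : s0 m
  · by_cases h1 : (Finsupp.single (0 : Fin (n + 2)) 1 : Mo n) ≤ m
    · rw [if_pos h1, coeff_piX, if_pos ((s0_sub_single m 1).2 hs)]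
      by_cases hr1 : (Finsupp.single (0 : Fin (n + 2)) (r + 1) : Mo n) ≤ m
      · rw [if_pos hr1, coeff_eps, if_pos ((s0_sub_single m (r+1)).2 hs)]
        have hr1' : r + 1 ≤ m 0 := Finsupp.single_le_iff.1 hr1
        have hEq : m - Finsupp.single (0 : Fin (n + 2)) (r + 1) + Finsupp.single (0 : Fin (n + 2)) r
            = m - Finsupp.single (0 : Fin (n + 2)) 1 := by
          ext j
          rcases eq_or_ne (0 : Fin (n + 2)) j with h | h
          · rw [← h, Finsupp.add_apply, Finsupp.tsub_apply, Finsupp.tsub_apply,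
              Finsupp.single_eq_same, Finsupp.single_eq_same, Finsupp.single_eq_same]
            omega
          · rw [Finsupp.add_apply, Finsupp.tsub_apply, Finsupp.tsub_apply,
              Finsupp.single_eq_of_ne' h, Finsupp.single_eq_of_ne' h, Finsupp.single_eq_of_ne' h]
            omega
        rw [hEq]
      · rw [if_neg hr1]
        have h1' : 1 ≤ m 0 := Finsupp.single_le_iff.1 h1
        have hr1' : ¬ r + 1 ≤ m 0 := fun hh => hr1 (Finsupp.single_le_iff.2 hh)
        have hm1 : m - Finsupp.single 0 1 = Finsupp.single (0 : Fin (n + 2)) (m 0 - 1) := by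
          ext j
          rcases eq_or_ne (0 : Fin (n + 2)) j with h | h
          · rw [← h, Finsupp.tsub_apply, Finsupp.single_apply, Finsupp.single_apply,
              if_pos rfl, if_pos rfl]
          · rw [Finsupp.tsub_apply, Finsupp.single_apply, Finsupp.single_apply,
              if_neg h, if_neg h, Nat.sub_zero]
            exact hs j (fun hj => h hj.symm)
        rw [hm1]
        exact hrmin _ (by omega)
    · rw [if_neg h1, if_neg (fun hh => h1 (Finsupp.single_le_iff.2
        (le_trans (by omega) (Finsupp.single_le_iff.1 hh))))]
  · rw [coeff_piX, if_neg ((fun hq => hs ((s0_sub_single m 1).1 hq)) :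
      ¬ s0 (m - Finsupp.single 0 1)), coeff_eps,
      if_neg ((fun hq => hs ((s0_sub_single m (r+1)).1 hq)) :
      ¬ s0 (m - Finsupp.single 0 (r+1)))]
    split <;> split <;> rfl

open Classical in
/-- a choice of nonzero coordinate other than `0` -/
def pick (m : Mo n) : Fin (n + 2) :=
  if h : ∃ i : Fin (n + 2), i ≠ 0 ∧ m i ≠ 0 then h.choose else 0

lemma pick_spec {m : Mo n} (h : ∃ i : Fin (n + 2), i ≠ 0 ∧ m i ≠ 0) :
    pick m ≠ 0 ∧ m (pick m) ≠ 0 := by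
  rw [pick, dif_pos h]
  exact h.choose_spec

lemma pick_eq_zero {m : Mo n} (h : ¬ ∃ i : Fin (n + 2), i ≠ 0 ∧ m i ≠ 0) : pick m = 0 := by
  rw [pick, dif_neg h]

lemma exists_decomp (g : Rg k n) (hg : ∀ m : Mo n, s0 m → coeff m g = 0) :
    ∃ b : Fin (n + 2) → Rg k n,
      g = ∑ i ∈ Finset.univ.erase (0 : Fin (n + 2)), X i * b i := by
  classical
  set gi : Fin (n + 2) → Rg k n :=
    fun i => mk (fun m => if pick m = i then coeff m g else 0) with hgi
  have hcgi : ∀ i m, coeff m (gi i) = if pick m = i then coeff m g else 0 :=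
    fun i m => rfl
  have hsum : g = ∑ i ∈ Finset.univ.erase (0 : Fin (n + 2)), gi i := by
    apply MvPowerSeries.ext
    intro m
    rw [map_sum, Finset.sum_congr rfl (fun i _ => hcgi i m), Finset.sum_ite_eq]
    by_cases hex : ∃ i : Fin (n + 2), i ≠ 0 ∧ m i ≠ 0
    · rw [if_pos (Finset.mem_erase.2 ⟨(pick_spec hex).1, Finset.mem_univ _⟩)]
    · rw [if_neg (by
        rw [pick_eq_zero hex]
        intro hc
        exact (Finset.mem_erase.1 hc).1 rfl)]
      refine hg m ?_
      intro i hi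
      by_contra hmi
      exact hex ⟨i, hi, hmi⟩
  have hdvd : ∀ i : Fin (n + 2), i ≠ 0 → (X i : Rg k n) ∣ gi i := by
    intro i hi
    have hiff := X_pow_dvd_iff (s := i) (n := 1) (φ := gi i)
    rw [pow_one] at hiff
    apply hiff.2
    intro m hm
    rw [hcgi]
    by_cases hp : pick m = i
    · by_cases hex : ∃ j : Fin (n + 2), j ≠ 0 ∧ m j ≠ 0
      · exfalso
        have := (pick_spec hex).2
        rw [hp] at this
        omega
      · exfalso
        rw [pick_eq_zero hex] at hp
        exact hi hp.symm
    · rw [if_neg hp]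
  have hch : ∀ i : Fin (n + 2), ∃ bi : Rg k n, (i ≠ 0 → gi i = X i * bi) := by
    intro i
    by_cases hi : i = 0
    · exact ⟨0, fun h => absurd hi h⟩
    · obtain ⟨bi, hbi⟩ := hdvd i hi
      exact ⟨bi, fun _ => hbi⟩
  choose b hbb using hch
  refine ⟨b, ?_⟩
  rw [hsum]
  apply Finset.sum_congr rfl
  intro i hi
  exact hbb i (Finset.mem_erase.1 hi).1

lemma fin_one_ne_zero : (1 : Fin (n + 2)) ≠ 0 := by
  intro h
  have := congrArg Fin.val h
  rw [Fin.val_one, Fin.val_zero] at this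
  omega

lemma fin_zero_ne_one : (0 : Fin (n + 2)) ≠ 1 := fun h => fin_one_ne_zero h.symm

lemma fin_one_lt {i : Fin (n + 2)} (h0 : i ≠ 0) (h1 : i ≠ 1) : 1 < i := by
  rw [Fin.lt_def, Fin.val_one]
  have hv0 : i.val ≠ 0 := fun h => h0 (Fin.ext (by rw [h, Fin.val_zero]))
  have hv1 : i.val ≠ 1 := fun h => h1 (Fin.ext (by rw [h, Fin.val_one]))
  omega

lemma fin_pos {i : Fin (n + 2)} (h0 : i ≠ 0) : 0 < i := by
  rw [Fin.lt_def, Fin.val_zero]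
  have hv0 : i.val ≠ 0 := fun h => h0 (Fin.ext (by rw [h, Fin.val_zero]))
  omega

lemma fin_lt_one {i : Fin (n + 2)} (h : i < 1) : i = 0 := by
  rw [Fin.lt_def, Fin.val_one] at h
  exact Fin.ext (by rw [Fin.val_zero]; omega)

lemma fin_ne_one_of_two_le {j : Fin (n + 2)} (hj : 2 ≤ (j : ℕ)) : j ≠ 1 := by
  intro h
  rw [h, Fin.val_one] at hj
  omega

end StmtAux

open MvPowerSeries in
/-- If `a(x₁,0,…,0) ≠ 0` has order `r` in `k[[x₁]]`, then `I_a ∼ I_{r,w}` for some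
invertible power series `w`; moreover if `s ≥ 2t - 1` then `w` can be chosen to be an
invertible power series in `x₁` only. -/
theorem stmt_2 {k : Type*} [Field k] [IsAlgClosed k] [CharZero k] (n s t : ℕ)
    (hst : t + 1 ≤ s) (ht : 3 ≤ t + 1)
    (a : MvPowerSeries (Fin (n + 2)) k) (r : ℕ)
    (hr : coeff (Finsupp.single (0 : Fin (n + 2)) r) a ≠ 0)
    (hrmin : ∀ i < r, coeff (Finsupp.single (0 : Fin (n + 2)) i) a = 0) :
    (∃ w : MvPowerSeries (Fin (n + 2)) k,
        IsUnit w ∧ IdealIso k (Ia k n s t a) (Ipz k n s t r w)) ∧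
    (2 * t - 1 ≤ s → ∃ w : MvPowerSeries (Fin (n + 2)) k, IsUnit w ∧
        (∀ m : Fin (n + 2) →₀ ℕ, (∃ i : Fin (n + 2), i ≠ 0 ∧ m i ≠ 0) → coeff m w = 0) ∧
        IdealIso k (Ia k n s t a) (Ipz k n s t r w)) := by
  classical
  -- decomposition of a
  obtain ⟨b, hb⟩ := exists_decomp (a - piX a)
    (fun m hm => by rw [map_sub, coeff_piX, if_pos hm, sub_self])
  set E2 := (Finset.univ.erase (0 : Fin (n + 2))).erase 1 with hE2
  set pa := piX a with hpa
  set c := b 1 with hcdef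
  set d := ∑ i ∈ E2, (X i : Rg k n) * b i with hddef
  have h1 : a = pa + X 1 * c + d := by
    have h10 : (1 : Fin (n + 2)) ∈ Finset.univ.erase (0 : Fin (n + 2)) :=
      Finset.mem_erase.2 ⟨fin_one_ne_zero, Finset.mem_univ _⟩
    have hsplit : (X 1 : Rg k n) * b 1 +
        ∑ i ∈ (Finset.univ.erase (0 : Fin (n + 2))).erase 1, X i * b i =
        ∑ i ∈ Finset.univ.erase (0 : Fin (n + 2)), X i * b i :=
      Finset.add_sum_erase _ (fun i => (X i : Rg k n) * b i) h10
    rw [hcdef, hddef, hE2]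
    linear_combination hb - hsplit
  -- the unit u, inverse of 1 - c * X 0
  have hcu : IsUnit ((1 : Rg k n) - c * X 0) := by
    rw [MvPowerSeries.isUnit_iff_constantCoeff, map_sub, map_one, map_mul, constantCoeff_X,
      mul_zero, sub_zero]
    exact isUnit_one
  obtain ⟨U, hU⟩ := hcu
  have h2 : ((1 : Rg k n) - c * X 0) * (↑U⁻¹ : Rg k n) = 1 := by
    rw [← hU]; exact U.mul_inv
  set u : Rg k n := (↑U⁻¹ : Rg k n) with hudef
  have huUnit : IsUnit u := Units.isUnit _
  -- the unit ε
  have hεUnit : IsUnit (eps a r) := by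
    rw [MvPowerSeries.isUnit_iff_constantCoeff, constantCoeff_eps]
    exact isUnit_iff_ne_zero.2 hr
  set ε : Rg k n := eps a r with hεdef
  have h3 : (X 0 : Rg k n) * pa = ε * X 0 ^ (r + 1) := X0_piX_eq a r hrmin
  -- the unit v, inverse of u * ε
  obtain ⟨V, hV⟩ := huUnit.mul hεUnit
  have h4 : (↑V⁻¹ : Rg k n) * (u * ε) = 1 := by rw [← hV]; exact V.inv_mul
  set v : Rg k n := (↑V⁻¹ : Rg k n) with hvdef
  have hvUnit : IsUnit v := Units.isUnit _
  have hv0 : constantCoeff v ≠ 0 :=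
    (hvUnit.map (constantCoeff)).ne_zero
  -- the automorphism
  set Ψ : Rg k n ≃ₐ[k] Rg k n := AlgEquiv.ofBijective (psiHom v)
    ⟨psi_injective hv0, psi_surjective hv0⟩ with hΨdef
  set F : Rg k n →+* Rg k n := (Ψ : Rg k n →+* Rg k n) with hFdef
  have hFX1 : F (X 1) = v * X 1 := by
    show psi v (X 1) = v * X 1
    rw [psi_of_conc conc1_X1, pow_one]
  have hFX : ∀ i : Fin (n + 2), i ≠ 1 → F (X i) = X i := by
    intro i hi
    show psi v (X i) = X i
    exact psi_of_conc0 (conc0_X hi)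
  set w : Rg k n := Ψ.symm (v * v * u) with hwdef
  have hFw : F w = v * v * u := by
    show Ψ (Ψ.symm (v * v * u)) = v * v * u
    exact Ψ.apply_symm_apply _
  have hwUnit : IsUnit w := ((hvUnit.mul hvUnit).mul huUnit).map Ψ.symm
  -- generator sets
  set qa : Rg k n := X 1 ^ 2 - a * X 0 * X 1 - X 0 ^ (s - t + 1) with hqa
  set qw : Rg k n := X 1 ^ 2 - X 0 ^ (r + 1) * X 1 - w * X 0 ^ (s - t + 1) with hqw
  set mg : Rg k n := X 0 ^ t * X 1 with hmg
  set P1 : Set (Rg k n) :=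
    {f | ∃ i j : Fin (n + 2), i < j ∧ (i, j) ≠ (0, 1) ∧ f = X i * X j} with hP1
  set P2 : Set (Rg k n) :=
    {f | ∃ j : Fin (n + 2), 2 ≤ (j : ℕ) ∧ f = X j ^ 2 - X 0 ^ s} with hP2
  have hIa_eq : Ia k n s t a = Ideal.span (P1 ∪ P2 ∪ {qa, mg}) := rfl
  have hIpz_eq : Ipz k n s t r w = Ideal.span (P1 ∪ P2 ∪ {qw, mg}) := rfl
  have hmem1 : ∀ (Q : Set (Rg k n)) (x), x ∈ P1 → x ∈ P1 ∪ P2 ∪ Q :=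
    fun Q x hx => Set.mem_union_left _ (Set.mem_union_left _ hx)
  have hmem2 : ∀ (Q : Set (Rg k n)) (x), x ∈ P2 → x ∈ P1 ∪ P2 ∪ Q :=
    fun Q x hx => Set.mem_union_left _ (Set.mem_union_right _ hx)
  have hmem3 : ∀ (Q : Set (Rg k n)) (x), x ∈ Q → x ∈ P1 ∪ P2 ∪ Q :=
    fun Q x hx => Set.mem_union_right _ hx
  have hpair : ∀ i j : Fin (n + 2), i < j → (i, j) ≠ (0, 1) → (X i : Rg k n) * X j ∈ P1 := by
    intro i j hij hne
    rw [hP1]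
    exact ⟨i, j, hij, hne, rfl⟩
  -- key identities
  have hkey0 : (v * X 1) ^ 2 - X 0 ^ (r + 1) * (v * X 1) - v * v * u * X 0 ^ (s - t + 1) =
      v * v * u * qa + v * v * u * d * (X 0 * X 1) := by
    rw [hqa, h1]
    linear_combination (-(v * v * (X 1 : Rg k n) ^ 2)) * h2 +
      (v * v * u * (X 1 : Rg k n)) * h3 +
      (v * (X 0 : Rg k n) ^ (r + 1) * (X 1 : Rg k n)) * h4
  have hFq : F qw = (v * X 1) ^ 2 - X 0 ^ (r + 1) * (v * X 1) - v * v * u * X 0 ^ (s - t + 1) := by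
    rw [hqw]
    simp only [map_sub, map_mul, map_pow, hFX1, hFw, hFX 0 fin_zero_ne_one]
  have hone : ((1 : Rg k n) - c * X 0) * (u * ε) * (u * ε) * (v * v * u) = 1 := by
    linear_combination ((v * (u * ε)) * (v * (u * ε))) * h2 + ((v * (u * ε)) + 1) * h4
  have hq_a_eq : qa = ((1 : Rg k n) - c * X 0) * (u * ε) * (u * ε) *
      ((v * X 1) ^ 2 - X 0 ^ (r + 1) * (v * X 1) - v * v * u * X 0 ^ (s - t + 1)) -
      d * (X 0 * X 1) := by
    linear_combination (-(((1 : Rg k n) - c * X 0) * (u * ε) * (u * ε))) * hkey0 +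
      (-(qa + d * (X 0 * X 1))) * hone
  have hd_span : ∀ (I : Ideal (Rg k n)),
      (∀ i : Fin (n + 2), i ≠ 0 → i ≠ 1 → (X 1 : Rg k n) * X i ∈ I) →
      d * (X 0 * X 1) ∈ I := by
    intro I hI
    rw [hddef, Finset.sum_mul]
    apply Submodule.sum_mem
    intro i hi
    rw [hE2] at hi
    obtain ⟨hi1, hi0m⟩ := Finset.mem_erase.1 hi
    obtain ⟨hi0, -⟩ := Finset.mem_erase.1 hi0m
    have hterm : (X i : Rg k n) * b i * (X 0 * X 1) = (b i * X 0) * (X 1 * X i) := by ring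
    rw [hterm]
    exact Ideal.mul_mem_left _ _ (hI i hi0 hi1)
  have hpairne : ∀ i : Fin (n + 2), ((1 : Fin (n + 2)), i) ≠ (0, 1) :=
    fun i hcon => fin_one_ne_zero (congrArg Prod.fst hcon)
  -- the ideal equality
  have hIdeal : Ia k n s t a = Ideal.map F (Ipz k n s t r w) := by
    rw [hIa_eq, hIpz_eq, Ideal.map_span]
    apply le_antisymm
    · rw [Ideal.span_le]
      rintro x hx
      rcases hx with (hx | hx) | hx
      · rw [hP1] at hx
        obtain ⟨i, j, hij, hne, rfl⟩ := hx
        by_cases hj : j = 1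
        · subst hj
          exfalso
          apply hne
          rw [fin_lt_one hij]
        · by_cases hi : i = 1
          · subst hi
            have hXij : (X 1 : Rg k n) * X j = (u * ε) * F (X 1 * X j) := by
              rw [map_mul, hFX1, hFX j hj]
              linear_combination (-((X 1 : Rg k n) * X j)) * h4
            rw [hXij]
            exact Ideal.mul_mem_left _ _ (Ideal.subset_span
              (Set.mem_image_of_mem _ (hmem1 _ _ (hpair 1 j hij hne))))
          · have hXij : (X i : Rg k n) * X j = F (X i * X j) := by
              rw [map_mul, hFX i hi, hFX j hj]
            rw [hXij]
            exact Ideal.subset_span (Set.mem_image_of_mem _ (hmem1 _ _ (hpair i j hij hne)))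
      · rw [hP2] at hx
        obtain ⟨j, hj2, rfl⟩ := hx
        have hj1 := fin_ne_one_of_two_le hj2
        have hXj : (X j : Rg k n) ^ 2 - X 0 ^ s = F (X j ^ 2 - X 0 ^ s) := by
          rw [map_sub, map_pow, map_pow, hFX j hj1, hFX 0 fin_zero_ne_one]
        rw [hXj]
        exact Ideal.subset_span (Set.mem_image_of_mem _
          (hmem2 _ _ (by rw [hP2]; exact ⟨j, hj2, rfl⟩)))
      · rcases hx with rfl | hx
        · rw [hq_a_eq, ← hFq]
          refine Submodule.sub_mem _ (Ideal.mul_mem_left _ _ (Ideal.subset_span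
            (Set.mem_image_of_mem _ (hmem3 _ _ (Set.mem_insert _ _))))) ?_
          refine hd_span _ (fun i hi0 hi1 => ?_)
          have hXij : (X 1 : Rg k n) * X i = (u * ε) * F (X 1 * X i) := by
            rw [map_mul, hFX1, hFX i hi1]
            linear_combination (-((X 1 : Rg k n) * X i)) * h4
          rw [hXij]
          exact Ideal.mul_mem_left _ _ (Ideal.subset_span (Set.mem_image_of_mem _
            (hmem1 _ _ (hpair 1 i (fin_one_lt hi0 hi1) (hpairne i)))))
        · have hx' : x = mg := Set.eq_of_mem_singleton hx
          subst hx'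
          have hXm : mg = (u * ε) * F mg := by
            rw [hmg, map_mul, map_pow, hFX 0 fin_zero_ne_one, hFX1]
            linear_combination (-((X 0 : Rg k n) ^ t * X 1)) * h4
          have hmemm : (u * ε) * F mg ∈ Ideal.span (⇑F '' (P1 ∪ P2 ∪ {qw, mg})) :=
            Ideal.mul_mem_left _ _ (Ideal.subset_span (Set.mem_image_of_mem _
              (hmem3 _ _ (Set.mem_insert_of_mem _ rfl))))
          rwa [← hXm] at hmemm
    · rw [Ideal.span_le]
      rintro x ⟨y, hy, rfl⟩
      rcases hy with (hy | hy) | hy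
      · rw [hP1] at hy
        obtain ⟨i, j, hij, hne, rfl⟩ := hy
        by_cases hj : j = 1
        · subst hj
          exfalso
          apply hne
          rw [fin_lt_one hij]
        · by_cases hi : i = 1
          · subst hi
            have hXij : F ((X 1 : Rg k n) * X j) = v * (X 1 * X j) := by
              rw [map_mul, hFX1, hFX j hj]
              ring
            rw [hXij]
            exact Ideal.mul_mem_left _ _ (Ideal.subset_span (hmem1 _ _ (hpair 1 j hij hne)))
          · have hXij : F ((X i : Rg k n) * X j) = X i * X j := by
              rw [map_mul, hFX i hi, hFX j hj]
            rw [hXij]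
            exact Ideal.subset_span (hmem1 _ _ (hpair i j hij hne))
      · rw [hP2] at hy
        obtain ⟨j, hj2, rfl⟩ := hy
        have hj1 := fin_ne_one_of_two_le hj2
        have hXj : F ((X j : Rg k n) ^ 2 - X 0 ^ s) = X j ^ 2 - X 0 ^ s := by
          rw [map_sub, map_pow, map_pow, hFX j hj1, hFX 0 fin_zero_ne_one]
        rw [hXj]
        exact Ideal.subset_span (hmem2 _ _ (by rw [hP2]; exact ⟨j, hj2, rfl⟩))
      · rcases hy with rfl | hy
        · rw [hFq, hkey0]
          refine Submodule.add_mem _ (Ideal.mul_mem_left _ _ (Ideal.subset_span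
            (hmem3 _ _ (Set.mem_insert _ _)))) ?_
          have hassoc : v * v * u * d * ((X 0 : Rg k n) * X 1) =
              (v * v * u) * (d * (X 0 * X 1)) := by ring
          rw [hassoc]
          refine Ideal.mul_mem_left _ _ (hd_span _ (fun i hi0 hi1 => ?_))
          exact Ideal.subset_span (hmem1 _ _ (hpair 1 i (fin_one_lt hi0 hi1) (hpairne i)))
        · have hy' : y = mg := Set.eq_of_mem_singleton hy
          subst hy'
          have hXm : F mg = v * mg := by
            rw [hmg, map_mul, map_pow, hFX 0 fin_zero_ne_one, hFX1]
            ring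
          rw [hXm]
          exact Ideal.mul_mem_left _ _ (Ideal.subset_span
            (hmem3 _ _ (Set.mem_insert_of_mem _ rfl)))
  -- the quotient isomorphism
  have E1 : (MvPowerSeries (Fin (n + 2)) k ⧸ Ia k n s t a) ≃ₐ[k]
      (MvPowerSeries (Fin (n + 2)) k ⧸ Ipz k n s t r w) :=
    (Ideal.quotientEquivAlg (Ipz k n s t r w) (Ia k n s t a) Ψ hIdeal).symm
  refine ⟨⟨w, hwUnit, ⟨E1⟩⟩, fun h2t => ?_⟩
  -- part 2
  obtain ⟨e, he⟩ := exists_decomp (w - piX w)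
    (fun m hm => by rw [map_sub, coeff_piX, if_pos hm, sub_self])
  set w₂ : Rg k n := piX w with hw2def
  have hw2Unit : IsUnit w₂ := by
    rw [MvPowerSeries.isUnit_iff_constantCoeff] at hwUnit ⊢
    have hcc : constantCoeff w₂ = constantCoeff w := by
      rw [hw2def, ← coeff_zero_eq_constantCoeff_apply, ← coeff_zero_eq_constantCoeff_apply,
        coeff_piX, if_pos s0_zero]
    rw [hcc]
    exact hwUnit
  have hvan : ∀ m : Fin (n + 2) →₀ ℕ, (∃ i : Fin (n + 2), i ≠ 0 ∧ m i ≠ 0) →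
      coeff m w₂ = 0 := by
    rintro m ⟨i, hi0, hmi⟩
    rw [hw2def, coeff_piX, if_neg (fun hs => hmi (hs i hi0))]
  set qw2 : Rg k n := X 1 ^ 2 - X 0 ^ (r + 1) * X 1 - w₂ * X 0 ^ (s - t + 1) with hqw2
  have hIpz2_eq : Ipz k n s t r w₂ = Ideal.span (P1 ∪ P2 ∪ {qw2, mg}) := rfl
  have hkey2 : ∀ (I : Ideal (Rg k n)),
      (∀ i : Fin (n + 2), i ≠ 0 → i ≠ 1 → (X 0 : Rg k n) * X i ∈ I) → mg ∈ I →
      (w - w₂) * X 0 ^ (s - t + 1) ∈ I := by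
    intro I hpairm hmgm
    rw [he, Finset.sum_mul]
    apply Submodule.sum_mem
    intro i hi
    obtain ⟨hi0, -⟩ := Finset.mem_erase.1 hi
    by_cases hi1 : i = 1
    · subst hi1
      have harith : s - t + 1 = t + (s + 1 - 2 * t) := by omega
      have hX : (X (1 : Fin (n + 2)) : Rg k n) * e 1 * X 0 ^ (s - t + 1) =
          (e 1 * X 0 ^ (s + 1 - 2 * t)) * mg := by
        rw [hmg, harith, pow_add]
        ring
      rw [hX]
      exact Ideal.mul_mem_left _ _ hmgm
    · have harith : s - t + 1 = 1 + (s - t) := by omega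
      have hX : (X i : Rg k n) * e i * X 0 ^ (s - t + 1) =
          (e i * X 0 ^ (s - t)) * (X 0 * X i) := by
        rw [harith, pow_add, pow_one]
        ring
      rw [hX]
      exact Ideal.mul_mem_left _ _ (hpairm i hi0 hi1)
  have hpairmem : ∀ (Q : Set (Rg k n)) (i : Fin (n + 2)), i ≠ 0 → i ≠ 1 →
      (X 0 : Rg k n) * X i ∈ Ideal.span (P1 ∪ P2 ∪ Q) :=
    fun Q i hi0 hi1 => Ideal.subset_span (hmem1 _ _ (hpair 0 i (fin_pos hi0)
      (fun hcon => hi1 ((Prod.ext_iff.1 hcon).2))))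
  have hIpz2 : Ipz k n s t r w = Ipz k n s t r w₂ := by
    rw [hIpz_eq, hIpz2_eq]
    apply le_antisymm
    · rw [Ideal.span_le]
      rintro x hx
      rcases hx with (hx | hx) | hx
      · exact Ideal.subset_span (hmem1 _ _ hx)
      · exact Ideal.subset_span (hmem2 _ _ hx)
      · rcases hx with rfl | hx
        · have hsplit : qw = qw2 - (w - w₂) * X 0 ^ (s - t + 1) := by
            rw [hqw, hqw2]
            ring
          rw [hsplit]
          refine Submodule.sub_mem _ (Ideal.subset_span (hmem3 _ _ (Set.mem_insert _ _))) ?_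
          exact hkey2 _ (fun i hi0 hi1 => hpairmem _ i hi0 hi1)
            (Ideal.subset_span (hmem3 _ _ (Set.mem_insert_of_mem _ rfl)))
        · have hx' : x = mg := Set.eq_of_mem_singleton hx
          subst hx'
          exact Ideal.subset_span (hmem3 _ _ (Set.mem_insert_of_mem _ rfl))
    · rw [Ideal.span_le]
      rintro x hx
      rcases hx with (hx | hx) | hx
      · exact Ideal.subset_span (hmem1 _ _ hx)
      · exact Ideal.subset_span (hmem2 _ _ hx)
      · rcases hx with rfl | hx
        · have hsplit : qw2 = qw + (w - w₂) * X 0 ^ (s - t + 1) := by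
            rw [hqw, hqw2]
            ring
          rw [hsplit]
          refine Submodule.add_mem _ (Ideal.subset_span (hmem3 _ _ (Set.mem_insert _ _))) ?_
          exact hkey2 _ (fun i hi0 hi1 => hpairmem _ i hi0 hi1)
            (Ideal.subset_span (hmem3 _ _ (Set.mem_insert_of_mem _ rfl)))
        · have hx' : x = mg := Set.eq_of_mem_singleton hx
          subst hx'
          exact Ideal.subset_span (hmem3 _ _ (Set.mem_insert_of_mem _ rfl))
  exact ⟨w₂, hw2Unit, hvan, ⟨E1.trans (Ideal.quotientEquivAlgOfEq k hIpz2)⟩⟩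
end

section
/- Let r ≥ 0 be an integer such that 2(r+1) ≠ s−t+1, and let w ∈ R be an invertible power series. Then I_{r,w} ∼ I_{r,1}. -/
noncomputable section

open MvPowerSeries

set_option linter.unusedVariables false
set_option linter.unusedSectionVars false
namespace StmtAux

section C1


variable {k : Type*} [Field k] {h : ℕ}

/-- degree of an exponent -/
def degw (d : Fin h →₀ ℕ) : ℕ := ∑ i, d i

lemma degw_add (a b : Fin h →₀ ℕ) : degw (a + b) = degw a + degw b := by
  simp [degw, Finset.sum_add_distrib]

lemma le_degw (d : Fin h →₀ ℕ) (i : Fin h) : d i ≤ degw d :=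
  Finset.single_le_sum (fun _ _ => Nat.zero_le _) (Finset.mem_univ i)

lemma degw_single (i : Fin h) (m : ℕ) : degw (Finsupp.single i m) = m := by
  classical
  simp [degw, Finsupp.single_apply]

lemma degw_eq_zero {d : Fin h →₀ ℕ} (hd : degw d = 0) : d = 0 := by
  ext i
  have := le_degw d i
  simp only [Finsupp.coe_zero, Pi.zero_apply]
  omega

lemma degw_zero : degw (0 : Fin h →₀ ℕ) = 0 := by simp [degw]

lemma constantCoeff_mem_nIdeal {f : MvPowerSeries (Fin h) k} (hf : f ∈ nIdeal k h) :
    constantCoeff (σ := Fin h) (R := k) f = 0 := by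
  have : nIdeal k h ≤ RingHom.ker (constantCoeff (σ := Fin h) (R := k)) := by
    rw [nIdeal, Ideal.span_le]
    rintro - ⟨i, rfl⟩
    simp [RingHom.mem_ker]
  exact this hf


lemma nIdeal_eq_span : nIdeal k h = Ideal.span (Set.range (X : Fin h → MvPowerSeries (Fin h) k)) := rfl

lemma X_mem_nIdeal (i : Fin h) : (X i : MvPowerSeries (Fin h) k) ∈ nIdeal k h :=
  Ideal.subset_span ⟨i, rfl⟩

lemma X_pow_mem_nIdeal (i : Fin h) (m : ℕ) (hm : 1 ≤ m) :
    (X i : MvPowerSeries (Fin h) k) ^ m ∈ nIdeal k h := by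
  obtain ⟨m', rfl⟩ : ∃ m', m = m' + 1 := ⟨m - 1, by omega⟩
  rw [pow_succ]
  exact Ideal.mul_mem_left _ _ (X_mem_nIdeal i)

/-- the splitting of a power series along least variables -/
def split (f : MvPowerSeries (Fin h) k) (i : Fin h) : MvPowerSeries (Fin h) k :=
  fun d => if ∀ j, j < i → d j = 0 then coeff (R := k) (d + Finsupp.single i 1) f else 0

lemma coeff_split (f : MvPowerSeries (Fin h) k) (i : Fin h) (d : Fin h →₀ ℕ) :
    coeff (R := k) d (split f i) =
      if ∀ j, j < i → d j = 0 then coeff (R := k) (d + Finsupp.single i 1) f else 0 := rfl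

lemma sum_X_mul_split (f : MvPowerSeries (Fin h) k) (hf : constantCoeff (σ := Fin h) (R := k) f = 0) :
    ∑ i, X i * split f i = f := by
  classical
  ext e
  rw [map_sum]
  by_cases he : e = 0
  · subst he
    rw [Finset.sum_eq_zero]
    · simpa using hf.symm
    intro i _
    rw [X, coeff_monomial_mul, if_neg]
    rw [Finsupp.single_le_iff]
    simp
  · -- e ≠ 0
    have hsupp : e.support.Nonempty := by
      rw [Finsupp.support_nonempty_iff]; exact he
    set i0 := e.support.min' hsupp with hi0
    have hi0mem : i0 ∈ e.support := e.support.min'_mem hsupp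
    have hi0ne : e i0 ≠ 0 := Finsupp.mem_support_iff.mp hi0mem
    have key : ∀ i : Fin h, coeff (R := k) e (X i * split f i) =
        if i = i0 then coeff (R := k) e f else 0 := by
      intro i
      rw [X, coeff_monomial_mul]
      by_cases hle : Finsupp.single i 1 ≤ e
      · rw [if_pos hle, one_mul, coeff_split]
        have hei : 1 ≤ e i := Finsupp.single_le_iff.mp hle
        set d' := e - Finsupp.single i 1 with hd'
        by_cases hcond : ∀ j, j < i → d' j = 0
        · rw [if_pos hcond]
          have hsub : d' + Finsupp.single i 1 = e := by
            rw [hd']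
            ext j
            by_cases hj : j = i
            · subst hj
              simp only [Finsupp.coe_add, Pi.add_apply, Finsupp.tsub_apply,
                Finsupp.single_apply, if_pos rfl, if_true]
              omega
            · simp only [Finsupp.coe_add, Pi.add_apply, Finsupp.tsub_apply,
                Finsupp.single_apply]
              rw [if_neg (by exact fun hc => hj hc.symm)]
              omega
          rw [hsub]
          have : i = i0 := by
            apply le_antisymm
            · by_contra hlt
              push_neg at hlt
              have := hcond i0 hlt
              rw [hd', Finsupp.tsub_apply, Finsupp.single_apply,
                if_neg (by intro hc; omega : ¬ i = i0)] at this
              simp only [Nat.sub_zero] at this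
              exact hi0ne this
            · exact e.support.min'_le i (Finsupp.mem_support_iff.mpr (by omega))
          rw [if_pos this]
        · rw [if_neg hcond, if_neg]
          intro hii0
          apply hcond
          intro j hj
          rw [hd', Finsupp.tsub_apply]
          have hj' : e j = 0 := by
            by_contra hne
            have : i0 ≤ j := e.support.min'_le j (Finsupp.mem_support_iff.mpr hne)
            rw [hii0] at hj
            exact absurd hj (not_lt.mpr this)
          simp [hj']
      · rw [if_neg hle, if_neg]
        intro hii0
        apply hle
        rw [Finsupp.single_le_iff, hii0]
        omega
    rw [Finset.sum_congr rfl (fun i _ => key i), Finset.sum_ite_eq' Finset.univ i0]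
    simp

lemma mem_nIdeal_pow {f : MvPowerSeries (Fin h) k} (j : ℕ)
    (hf : ∀ d, degw d < j → coeff (R := k) d f = 0) : f ∈ (nIdeal k h) ^ j := by
  induction j generalizing f with
  | zero => simp
  | succ j ih =>
    have h0 : constantCoeff (σ := Fin h) (R := k) f = 0 := by
      have := hf 0 (by rw [degw_zero]; omega)
      simpa using this
    rw [← sum_X_mul_split f h0]
    apply Ideal.sum_mem
    intro i _
    rw [pow_succ']
    apply Ideal.mul_mem_mul
    · exact Ideal.subset_span ⟨i, rfl⟩
    · apply ih
      intro d hd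
      rw [coeff_split]
      split_ifs with hc
      · apply hf
        rw [degw_add, degw_single]
        omega
      · rfl

lemma coeff_eq_zero_of_mem_nIdeal_pow (j : ℕ) :
    ∀ f ∈ (nIdeal k h) ^ j, ∀ d, degw d < j → coeff (R := k) d f = 0 := by
  classical
  induction j with
  | zero => intro f hf d hd; omega
  | succ j ih =>
    intro f hf
    rw [pow_succ] at hf
    refine Submodule.mul_induction_on hf ?_ ?_
    · intro x hx y hy d hd
      rw [coeff_mul]
      apply Finset.sum_eq_zero
      rintro ⟨d1, d2⟩ hmem
      rw [Finset.HasAntidiagonal.mem_antidiagonal] at hmem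
      by_cases h1 : degw d1 < j
      · rw [ih x hx d1 h1, zero_mul]
      · have hdeg : degw d1 + degw d2 = degw d := by rw [← degw_add, hmem]
        have : degw d2 = 0 := by omega
        have hd2 : d2 = 0 := degw_eq_zero this
        subst hd2
        have : coeff (R := k) 0 y = 0 := by
          simpa using constantCoeff_mem_nIdeal hy
        rw [this, mul_zero]
    · intro x y hx hy d hd
      rw [map_add, hx d hd, hy d hd, add_zero]


end C1

section C2


variable {k : Type*} [Field k] {n s t r : ℕ} {w : MvPowerSeries (Fin (n + 2)) k}

lemma memI1 (i j : Fin (n + 2)) (hij : i < j) (hne : (i, j) ≠ (0, 1)) :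
    X i * X j ∈ Ipz k n s t r w :=
  Ideal.subset_span (Or.inl (Or.inl ⟨i, j, hij, hne, rfl⟩))

lemma memI2 (j : Fin (n + 2)) (hj : 2 ≤ (j : ℕ)) :
    X j ^ 2 - X 0 ^ s ∈ Ipz k n s t r w :=
  Ideal.subset_span (Or.inl (Or.inr ⟨j, hj, rfl⟩))

lemma memI3 :
    X 1 ^ 2 - X 0 ^ (r + 1) * X 1 - w * X 0 ^ (s - t + 1) ∈ Ipz k n s t r w :=
  Ideal.subset_span (Or.inr (Set.mem_insert _ _))

lemma memI4 : X 0 ^ t * X 1 ∈ Ipz k n s t r w :=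
  Ideal.subset_span (Or.inr (Set.mem_insert_of_mem _ rfl))

section
variable (hst : t + 1 ≤ s) (ht : 3 ≤ t + 1) (hw : IsUnit w)
include hst ht hw
set_option linter.unusedSectionVars false

lemma X0_pow_succ_mem : (X 0 : MvPowerSeries (Fin (n + 2)) k) ^ (s + 1) ∈ Ipz k n s t r w := by
  set I := Ipz k n s t r w
  have hpow : (X 0 : MvPowerSeries (Fin (n + 2)) k) ^ t * X 0 ^ (s - t + 1) = X 0 ^ (s + 1) := by
    rw [← pow_add]; congr 1; omega
  have h3' : X 0 ^ t * (X 1 ^ 2 - X 0 ^ (r + 1) * X 1 - w * X 0 ^ (s - t + 1)) ∈ I :=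
    I.mul_mem_left _ memI3
  have h4a : (X 0 ^ t * X 1) * X 1 ∈ I := I.mul_mem_right _ memI4
  have h4b : (X 0 : MvPowerSeries (Fin (n + 2)) k) ^ (r + 1) * (X 0 ^ t * X 1) ∈ I :=
    I.mul_mem_left _ memI4
  have key : w * X 0 ^ (s + 1) =
      (X 0 ^ t * X 1) * X 1 - X 0 ^ (r + 1) * (X 0 ^ t * X 1) -
        X 0 ^ t * (X 1 ^ 2 - X 0 ^ (r + 1) * X 1 - w * X 0 ^ (s - t + 1)) := by
    rw [← hpow]; ring
  have hmem : w * X 0 ^ (s + 1) ∈ I := by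
    rw [key]; exact sub_mem (sub_mem h4a h4b) h3'
  have hthis := I.mul_mem_left (↑hw.unit⁻¹) hmem
  have h1 := hw.unit.inv_mul
  rw [hw.unit_spec] at h1
  rwa [← mul_assoc, h1, one_mul] at hthis

lemma sq_le : nIdeal k (n + 2) * nIdeal k (n + 2) ≤
    Ipz k n s t r w ⊔ Ideal.span {(X 0 : MvPowerSeries (Fin (n + 2)) k)} * nIdeal k (n + 2) := by
  set I := Ipz k n s t r w
  set J := I ⊔ Ideal.span {(X 0 : MvPowerSeries (Fin (n + 2)) k)} * nIdeal k (n + 2) with hJ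
  have hIJ : I ≤ J := le_sup_left
  have hX0J : ∀ g : MvPowerSeries (Fin (n + 2)) k, g ∈ nIdeal k (n + 2) → X 0 * g ∈ J := by
    intro g hg
    exact Ideal.mem_sup_right (Ideal.mul_mem_mul (Ideal.mem_span_singleton_self _) hg)
  have hs3 : 3 ≤ s := le_trans ht hst
  have aux : ∀ i j : Fin (n + 2), i ≤ j → X i * X j ∈ J := by
    intro i j hij
    by_cases hi0 : i = 0
    · subst hi0
      by_cases hj1 : j = 1
      · subst hj1; exact hX0J _ (X_mem_nIdeal 1)
      · by_cases hj0 : j = 0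
        · subst hj0; exact hX0J _ (X_mem_nIdeal 0)
        · refine hIJ (memI1 0 j ?_ ?_)
          · exact lt_of_le_of_ne hij (fun hc => hj0 hc.symm)
          · intro hc
            exact hj1 (congrArg Prod.snd hc)
    · by_cases hi1 : i = 1
      · subst hi1
        by_cases hj1 : j = 1
        · subst hj1
          have hid : (X 1 : MvPowerSeries (Fin (n + 2)) k) * X 1 =
              (X 1 ^ 2 - X 0 ^ (r + 1) * X 1 - w * X 0 ^ (s - t + 1)) +
              (X 0 * (X 0 ^ r * X 1) + X 0 * (w * X 0 ^ (s - t))) := by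
            have h1 : (X 0 : MvPowerSeries (Fin (n + 2)) k) ^ (r + 1) * X 1 =
                X 0 * (X 0 ^ r * X 1) := by ring
            have h2 : w * (X 0 : MvPowerSeries (Fin (n + 2)) k) ^ (s - t + 1) =
                X 0 * (w * X 0 ^ (s - t)) := by ring
            rw [← h1, ← h2]; ring
          rw [hid]
          refine Ideal.add_mem _ (hIJ memI3) (Ideal.add_mem _ ?_ ?_)
          · exact hX0J _ (Ideal.mul_mem_left _ _ (X_mem_nIdeal 1))
          · exact hX0J _ (Ideal.mul_mem_left _ _ (X_pow_mem_nIdeal 0 (s - t) (by omega)))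
        · refine hIJ (memI1 1 j (lt_of_le_of_ne hij (fun hc => hj1 hc.symm)) ?_)
          intro hc
          have h1 : (1 : Fin (n + 2)) = 0 := congrArg Prod.fst hc
          have : ((1 : Fin (n + 2)) : ℕ) = 0 := by rw [h1]; simp
          simp at this
      · -- i ≥ 2
        have hival : 2 ≤ (i : ℕ) := by
          have h0 : (i : ℕ) ≠ 0 := by
            intro hc; exact hi0 (Fin.ext (by simpa using hc))
          have h1 : (i : ℕ) ≠ 1 := by
            intro hc; exact hi1 (Fin.ext (by simp [hc]))
          omega
        by_cases hji : j = i
        · subst hji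
          have hid : (X j : MvPowerSeries (Fin (n + 2)) k) * X j =
              (X j ^ 2 - X 0 ^ s) + X 0 * X 0 ^ (s - 1) := by
            have : (X 0 : MvPowerSeries (Fin (n + 2)) k) * X 0 ^ (s - 1) = X 0 ^ s := by
              rw [← pow_succ']; congr 1; omega
            rw [this]; ring
          rw [hid]
          exact Ideal.add_mem _ (hIJ (memI2 j hival)) (hX0J _ (X_pow_mem_nIdeal 0 (s-1) (by omega)))
        · refine hIJ (memI1 i j (lt_of_le_of_ne hij (fun hc => hji hc.symm)) ?_)
          intro hc
          exact hi0 (congrArg Prod.fst hc)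
  rw [nIdeal, Ideal.span_mul_span, Ideal.span_le]
  intro x hx
  simp only [Set.mem_mul, Set.mem_iUnion, Set.mem_range, Set.mem_singleton_iff, exists_prop] at hx
  obtain ⟨a, ⟨i, rfl⟩, b, ⟨j, rfl⟩, rfl⟩ := hx
  rcases le_total i j with hij | hij
  · exact aux i j hij
  · rw [mul_comm]; exact aux j i hij

lemma nIdeal_pow_le : nIdeal k (n + 2) ^ (s + 2) ≤ Ipz k n s t r w := by
  set I := Ipz k n s t r w
  set nI := nIdeal k (n + 2)
  have step : ∀ j : ℕ, nI ^ (j + 2) ≤ I ⊔ Ideal.span {(X 0 : MvPowerSeries (Fin (n + 2)) k) ^ (j + 1)} * nI := by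
    intro j
    induction j with
    | zero =>
      have := sq_le (k := k) (n := n) (s := s) (t := t) (r := r) (w := w) hst ht hw
      simpa [pow_two] using this
    | succ j ih =>
      calc nI ^ (j + 1 + 2) = nI ^ (j + 2) * nI := by ring
        _ ≤ (I ⊔ Ideal.span {(X 0 : MvPowerSeries (Fin (n + 2)) k) ^ (j + 1)} * nI) * nI :=
            Ideal.mul_mono_left ih
        _ = I * nI ⊔ Ideal.span {(X 0 : MvPowerSeries (Fin (n + 2)) k) ^ (j + 1)} * (nI * nI) := by
            rw [Ideal.sup_mul, mul_assoc]
        _ ≤ I ⊔ Ideal.span {(X 0 : MvPowerSeries (Fin (n + 2)) k) ^ (j + 1)} *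
              (I ⊔ Ideal.span {(X 0 : MvPowerSeries (Fin (n + 2)) k)} * nI) :=
            sup_le_sup Ideal.mul_le_left (Ideal.mul_mono_right (sq_le hst ht hw))
        _ ≤ I ⊔ Ideal.span {(X 0 : MvPowerSeries (Fin (n + 2)) k) ^ (j + 1 + 1)} * nI := by
            rw [Ideal.mul_sup, ← mul_assoc, Ideal.span_singleton_mul_span_singleton, ← pow_succ]
            refine sup_le le_sup_left (sup_le ?_ le_sup_right)
            exact le_sup_left.trans' Ideal.mul_le_right
  have h1 : nI ^ (s + 2) ≤ I ⊔ Ideal.span {(X 0 : MvPowerSeries (Fin (n + 2)) k) ^ (s + 1)} * nI :=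
    step s
  refine h1.trans (sup_le le_rfl ?_)
  have : Ideal.span {(X 0 : MvPowerSeries (Fin (n + 2)) k) ^ (s + 1)} ≤ I := by
    rw [Ideal.span_singleton_le_iff_mem]
    exact X0_pow_succ_mem hst ht hw
  exact (Ideal.mul_mono_left this).trans Ideal.mul_le_left

end

end C2

section C3


variable {k : Type*} [Field k] {B : Type*} [CommRing B] [Algebra k B]

lemma one_add_pow (m : ℕ) (x : B) : ∃ g, (1 + x) ^ m = 1 + (m : B) * x + x ^ 2 * g := by
  induction m with
  | zero => exact ⟨0, by simp⟩
  | succ m ih =>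
    obtain ⟨g, hg⟩ := ih
    refine ⟨g + (m : B) + x * g, ?_⟩
    rw [pow_succ, hg]
    push_cast
    ring

variable [CharZero k]

lemma exists_pow_eq_one_add (M : Ideal B) (m : ℕ) (hm : 1 ≤ m)
    (μ : B) (hμm : (m : B) * μ = 1) :
    ∀ (j : ℕ) (y : B), y ∈ M → y ^ (2 ^ j) = 0 →
      ∃ β : B, β ^ m = 1 + y ∧ β - 1 ∈ M := by
  intro j
  induction j with
  | zero =>
    intro y hyM hy
    rw [pow_zero, pow_one] at hy
    subst hy
    exact ⟨1, by simp, by simp⟩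
  | succ j ih =>
    intro y hyM hy
    obtain ⟨g, hg⟩ := one_add_pow m (μ * y)
    set β₀ := 1 + μ * y with hβ₀
    have hμy_nil : (μ * y) ^ (2 ^ (j + 1)) = 0 := by
      rw [mul_pow, hy, mul_zero]
    have hβ₀unit : IsUnit β₀ := IsNilpotent.isUnit_one_add ⟨2 ^ (j + 1), hμy_nil⟩
    set z := y ^ 2 * (μ ^ 2 * g) with hz
    have hv_eq : β₀ ^ m = 1 + y + z := by
      rw [hβ₀, hg, hz]
      have : (m : B) * (μ * y) = y := by rw [← mul_assoc, hμm, one_mul]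
      rw [this]
      ring
    have hy2 : (y ^ 2) ^ (2 ^ j) = 0 := by
      rw [← pow_mul]
      have : 2 * 2 ^ j = 2 ^ (j + 1) := by rw [pow_succ]; ring
      rw [this, hy]
    have hznil : z ^ (2 ^ j) = 0 := by
      rw [hz, mul_pow, hy2, zero_mul]
    have hvunit : IsUnit (β₀ ^ m) := hβ₀unit.pow m
    set δ := -(z * ↑hvunit.unit⁻¹) with hδ
    have hvv : β₀ ^ m * ↑hvunit.unit⁻¹ = 1 := hvunit.mul_val_inv
    have hzM : z ∈ M := by
      rw [hz]
      exact Ideal.mul_mem_right _ _ (Ideal.pow_mem_of_mem M hyM 2 (by omega))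
    have hδM : δ ∈ M := by
      rw [hδ]
      exact neg_mem (Ideal.mul_mem_right _ _ hzM)
    have hδnil : δ ^ (2 ^ j) = 0 := by
      rw [hδ, neg_pow, mul_pow, hznil, zero_mul, mul_zero]
    have hident : β₀ ^ m * (1 + δ) = 1 + y := by
      calc β₀ ^ m * (1 + δ) = β₀ ^ m - (β₀ ^ m * ↑hvunit.unit⁻¹) * z := by rw [hδ]; ring
        _ = β₀ ^ m - z := by rw [hvv, one_mul]
        _ = 1 + y := by rw [hv_eq]; ring
    obtain ⟨β₁, hβ₁, hβ₁M⟩ := ih δ hδM hδnil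
    refine ⟨β₀ * β₁, ?_, ?_⟩
    · rw [mul_pow, hβ₁, hident]
    · have : β₀ * β₁ - 1 = β₀ * (β₁ - 1) + (β₀ - 1) := by ring
      rw [this]
      refine Ideal.add_mem _ (Ideal.mul_mem_left _ _ hβ₁M) ?_
      have h2 : β₀ - 1 = μ * y := by rw [hβ₀]; ring
      rw [h2]
      exact Ideal.mul_mem_left _ _ hyM

variable [IsAlgClosed k]

lemma exists_root (M : Ideal B) (N : ℕ) (hM : M ^ N = ⊥)
    (u : B) (c : k) (hc : c ≠ 0) (hmem : u - algebraMap k B c ∈ M)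
    (m : ℕ) (hm : 1 ≤ m) :
    ∃ (ρ : B) (γ : k), γ ≠ 0 ∧ ρ ^ m = u ∧ ρ - algebraMap k B γ ∈ M := by
  set y := algebraMap k B c⁻¹ * u - 1 with hy
  have hyM : y ∈ M := by
    have : y = algebraMap k B c⁻¹ * (u - algebraMap k B c) := by
      rw [hy, mul_sub, ← map_mul, inv_mul_cancel₀ hc, map_one]
    rw [this]
    exact Ideal.mul_mem_left _ _ hmem
  have hyN : y ^ N = 0 := by
    have := Ideal.pow_mem_pow hyM N
    rwa [hM, Ideal.mem_bot] at this
  have hynil : y ^ (2 ^ N) = 0 := by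
    have h2N : N ≤ 2 ^ N := Nat.le_of_lt (Nat.lt_two_pow_self (n := N))
    calc y ^ (2 ^ N) = y ^ N * y ^ (2 ^ N - N) := by rw [← pow_add]; congr 1; omega
      _ = 0 := by rw [hyN, zero_mul]
  have hmk : ((m : k)) ≠ 0 := Nat.cast_ne_zero.mpr (by omega)
  have hμm : (m : B) * algebraMap k B ((m : k))⁻¹ = 1 := by
    rw [← map_natCast (algebraMap k B) m, ← map_mul, mul_inv_cancel₀ hmk, map_one]
  obtain ⟨β, hβ, hβM⟩ := exists_pow_eq_one_add M m hm _ hμm N y hyM hynil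
  obtain ⟨γ, hγ⟩ := IsAlgClosed.exists_pow_nat_eq c (n := m) (by omega)
  have hγ0 : γ ≠ 0 := by
    intro hc0
    rw [hc0, zero_pow (by omega)] at hγ
    exact hc hγ.symm
  refine ⟨algebraMap k B γ * β, γ, hγ0, ?_, ?_⟩
  · rw [mul_pow, ← map_pow, hγ, hβ, hy]
    rw [add_sub_cancel, ← mul_assoc, ← map_mul, mul_inv_cancel₀ hc, map_one, one_mul]
  · have : algebraMap k B γ * β - algebraMap k B γ = algebraMap k B γ * (β - 1) := by ring
    rw [this]
    exact Ideal.mul_mem_left _ _ hβM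


end C3

section Bsetup

set_option maxHeartbeats 1000000
set_option synthInstance.maxHeartbeats 400000

variable {k : Type*} [Field k] {h N : ℕ}

/-- The truncated ring. -/
abbrev Bq (k : Type*) [Field k] (h N : ℕ) : Type _ :=
  MvPowerSeries (Fin h) k ⧸ (nIdeal k h ^ N)

/-- The image of the maximal ideal in the truncated ring. -/
def MB (k : Type*) [Field k] (h N : ℕ) : Ideal (Bq k h N) :=
  Ideal.map (Ideal.Quotient.mk (nIdeal k h ^ N)) (nIdeal k h)

lemma MB_pow_eq_bot : MB k h N ^ N = ⊥ := by
  rw [MB, ← Ideal.map_pow, Ideal.map_quotient_self]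

lemma mem_nIdeal_of_constantCoeff {f : MvPowerSeries (Fin h) k}
    (hf : constantCoeff (σ := Fin h) (R := k) f = 0) : f ∈ nIdeal k h := by
  have := mem_nIdeal_pow (k := k) (h := h) 1 (f := f) ?_
  · rwa [pow_one] at this
  · intro d hd
    have hd0 : d = 0 := degw_eq_zero (by omega)
    subst hd0
    rw [MvPowerSeries.coeff_zero_eq_constantCoeff]
    exact hf

lemma res_mkB (b : Bq k h N) :
    ∃ c : k, b - algebraMap k (Bq k h N) c ∈ MB k h N := by
  obtain ⟨f, rfl⟩ := Ideal.Quotient.mk_surjective b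
  refine ⟨constantCoeff (σ := Fin h) (R := k) f, ?_⟩
  have halg : ∀ c : k, algebraMap k (Bq k h N) c
      = Ideal.Quotient.mk (nIdeal k h ^ N) (MvPowerSeries.C (σ := Fin h) (R := k) c) := by
    intro c
    rfl
  rw [halg, ← map_sub]
  refine Ideal.mem_map_of_mem _ (mem_nIdeal_of_constantCoeff ?_)
  rw [map_sub]
  simp

lemma mkB_X_mem (i : Fin h) :
    Ideal.Quotient.mk (nIdeal k h ^ N) (X i) ∈ MB k h N :=
  Ideal.mem_map_of_mem _ (X_mem_nIdeal i)

/-- The canonical algebra hom from polynomials to the truncated ring. -/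
def epsA (k : Type*) [Field k] (h N : ℕ) : MvPolynomial (Fin h) k →ₐ[k] Bq k h N :=
  (Ideal.Quotient.mkₐ k (nIdeal k h ^ N)).comp (MvPolynomial.coeToMvPowerSeries.algHom k)

lemma epsA_apply (p : MvPolynomial (Fin h) k) :
    epsA k h N p = Ideal.Quotient.mk (nIdeal k h ^ N) (↑p : MvPowerSeries (Fin h) k) := by
  simp [epsA, MvPolynomial.coeToMvPowerSeries.algHom_apply, Algebra.algebraMap_self,
    MvPowerSeries.map_id, Ideal.Quotient.mkₐ_eq_mk]

lemma sub_trunc_mem (hh : 0 < h) (f : MvPowerSeries (Fin h) k) :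
    f - ↑(MvPowerSeries.trunc k (Finsupp.equivFunOnFinite.symm (fun _ => N)) f)
      ∈ nIdeal k h ^ N := by
  set nb : Fin h →₀ ℕ := Finsupp.equivFunOnFinite.symm (fun _ => N) with hnb
  apply mem_nIdeal_pow N
  intro d hd
  rw [map_sub]
  have hlt : d < nb := by
    constructor
    · intro i
      have h1 := le_degw d i
      have h2 : nb i = N := by simp [hnb]
      omega
    · intro hle
      have := hle ⟨0, hh⟩
      have h2 : nb ⟨0, hh⟩ = N := by simp [hnb]
      have h1 := le_degw d ⟨0, hh⟩
      omega
  rw [MvPolynomial.coeff_coe, MvPowerSeries.coeff_trunc, if_pos hlt, sub_self]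

lemma epsA_surjective (hh : 0 < h) : Function.Surjective (epsA k h N) := by
  intro b
  obtain ⟨f, rfl⟩ := Ideal.Quotient.mk_surjective b
  refine ⟨MvPowerSeries.trunc k (Finsupp.equivFunOnFinite.symm (fun _ => N)) f, ?_⟩
  rw [epsA_apply, Ideal.Quotient.mk_eq_mk_iff_sub_mem]
  rw [show ((MvPowerSeries.trunc k (Finsupp.equivFunOnFinite.symm (fun _ => N)) f :
      MvPolynomial (Fin h) k) : MvPowerSeries (Fin h) k) - f
    = -(f - ↑(MvPowerSeries.trunc k (Finsupp.equivFunOnFinite.symm (fun _ => N)) f)) by ring]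
  exact neg_mem (sub_trunc_mem hh f)

lemma poly_monomial_mem_pow (j : ℕ) (d : Fin h →₀ ℕ) (c : k) (hjd : j ≤ degw d) :
    MvPolynomial.monomial d c ∈
      (Ideal.span (Set.range (MvPolynomial.X : Fin h → MvPolynomial (Fin h) k))) ^ j := by
  induction j generalizing d with
  | zero => simp
  | succ j ih =>
    have hd0 : ∃ i, d i ≠ 0 := by
      by_contra hc
      push_neg at hc
      have : d = 0 := by ext i; exact hc i
      rw [this, degw_zero] at hjd
      omega
    obtain ⟨i, hi⟩ := hd0
    set d' := d - Finsupp.single i 1 with hd'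
    have hsum : Finsupp.single i 1 + d' = d := by
      ext j'
      rw [hd']
      simp only [Finsupp.coe_add, Pi.add_apply, Finsupp.tsub_apply, Finsupp.single_apply]
      by_cases hji : i = j'
      · subst hji
        simp only [if_pos rfl, if_true]
        omega
      · rw [if_neg hji]; omega
    have hdeg : 1 + degw d' = degw d := by
      rw [← hsum, degw_add, degw_single]
    have hmono : MvPolynomial.monomial d c = MvPolynomial.X i * MvPolynomial.monomial d' c := by
      rw [← hsum, MvPolynomial.monomial_single_add, pow_one]
    rw [hmono, pow_succ']
    exact Ideal.mul_mem_mul (Ideal.subset_span ⟨i, rfl⟩) (ih d' (by omega))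

lemma mem_poly_span_pow_of_ker (p : MvPolynomial (Fin h) k)
    (hp : epsA k h N p = 0) :
    p ∈ (Ideal.span (Set.range (MvPolynomial.X : Fin h → MvPolynomial (Fin h) k))) ^ N := by
  rw [epsA_apply, Ideal.Quotient.eq_zero_iff_mem] at hp
  have hco : ∀ d, degw d < N → MvPolynomial.coeff d p = 0 := by
    intro d hd
    rw [← MvPolynomial.coeff_coe]
    exact coeff_eq_zero_of_mem_nIdeal_pow N _ hp d hd
  rw [MvPolynomial.as_sum p]
  apply Ideal.sum_mem
  intro v hv
  apply poly_monomial_mem_pow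
  by_contra hc
  push_neg at hc
  exact (MvPolynomial.mem_support_iff.mp hv) (hco v hc)

lemma aeval_vanish_on_ker (g : Fin h → Bq k h N) (hg : ∀ i, g i ∈ MB k h N)
    (p : MvPolynomial (Fin h) k)
    (hp : p ∈ (Ideal.span (Set.range (MvPolynomial.X : Fin h → MvPolynomial (Fin h) k))) ^ N) :
    MvPolynomial.aeval g p = 0 := by
  have h1 : MvPolynomial.aeval g p ∈
      Ideal.map (MvPolynomial.aeval (R := k) g).toRingHom
        ((Ideal.span (Set.range (MvPolynomial.X : Fin h → MvPolynomial (Fin h) k))) ^ N) :=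
    Ideal.mem_map_of_mem _ hp
  rw [Ideal.map_pow, Ideal.map_span] at h1
  have h2 : Ideal.span ((MvPolynomial.aeval (R := k) g).toRingHom ''
      Set.range (MvPolynomial.X : Fin h → MvPolynomial (Fin h) k)) ≤ MB k h N := by
    rw [Ideal.span_le]
    rintro - ⟨-, ⟨i, rfl⟩, rfl⟩
    simpa using hg i
  have h3 := (Ideal.pow_right_mono h2 N) h1
  rw [MB_pow_eq_bot] at h3
  simpa using h3

lemma aeval_surjective (u : Fin h → Bq k h N) (γ : Fin h → k)
    (hγ : ∀ i, γ i ≠ 0) (hu : ∀ i, u i - algebraMap k (Bq k h N) (γ i) ∈ MB k h N) :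
    Function.Surjective
      (MvPolynomial.aeval (R := k)
        (fun i => u i * Ideal.Quotient.mk (nIdeal k h ^ N) (X i)) :
          MvPolynomial (Fin h) k →ₐ[k] Bq k h N) := by
  classical
  set M := MB k h N with hM
  set xb : Fin h → Bq k h N := fun i => Ideal.Quotient.mk (nIdeal k h ^ N) (X i) with hxb
  set g : Fin h → Bq k h N := fun i => u i * xb i with hg
  set T := (MvPolynomial.aeval (R := k) g).range with hT
  have hgT : ∀ i, g i ∈ T := fun i => ⟨MvPolynomial.X i, by simp⟩
  have halgT : ∀ c : k, algebraMap k (Bq k h N) c ∈ T := fun c => T.algebraMap_mem c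
  have hxbM : ∀ i, xb i ∈ M := fun i => mkB_X_mem i
  have hgM : ∀ i, g i ∈ M := fun i => Ideal.mul_mem_left _ _ (hxbM i)
  have hMspan : M = Ideal.span (Set.range xb) := by
    rw [hM, MB]
    have hmap : Ideal.map (Ideal.Quotient.mk (nIdeal k h ^ N))
        (Ideal.span (Set.range (X : Fin h → MvPowerSeries (Fin h) k)))
        = Ideal.span (Set.range xb) := by
      rw [Ideal.map_span, ← Set.range_comp]
      rfl
    exact hmap
  have claimD : ∀ b ∈ M, ∃ τ, τ ∈ T ∧ τ ∈ M ∧ b - τ ∈ M ^ 2 := by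
    intro b hb
    rw [hMspan, Ideal.mem_span_range_iff_exists_fun] at hb
    obtain ⟨cf, hcf⟩ := hb
    choose κ hκ using fun i => res_mkB (N := N) (h := h) (cf i)
    refine ⟨∑ i, algebraMap k (Bq k h N) (κ i * (γ i)⁻¹) * g i, ?_, ?_, ?_⟩
    · exact Subalgebra.sum_mem T fun i _ => T.mul_mem (halgT _) (hgT i)
    · exact Ideal.sum_mem _ fun i _ => Ideal.mul_mem_left _ _ (hgM i)
    · rw [← hcf, ← Finset.sum_sub_distrib]
      apply Ideal.sum_mem
      intro i _
      have e1 : algebraMap k (Bq k h N) (κ i * (γ i)⁻¹) * algebraMap k (Bq k h N) (γ i)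
          = algebraMap k (Bq k h N) (κ i) := by
        rw [← map_mul, mul_assoc, inv_mul_cancel₀ (hγ i), mul_one]
      have key : cf i * xb i - algebraMap k (Bq k h N) (κ i * (γ i)⁻¹) * g i
          = ((cf i - algebraMap k (Bq k h N) (κ i)) - algebraMap k (Bq k h N) (κ i * (γ i)⁻¹) *
              (u i - algebraMap k (Bq k h N) (γ i))) * xb i := by
        simp only [hg]
        linear_combination (-(xb i)) * e1
      rw [key, pow_two]
      exact Ideal.mul_mem_mul (Ideal.sub_mem _ (hκ i) (Ideal.mul_mem_left _ _ (hu i))) (hxbM i)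
  have claimP : ∀ j, ∀ z ∈ M ^ (j + 1), ∃ τ, τ ∈ T ∧ τ ∈ M ^ (j + 1) ∧ z - τ ∈ M ^ (j + 2) := by
    intro j
    induction j with
    | zero =>
      intro z hz
      obtain ⟨τ, h1, h2, h3⟩ := claimD z (by rwa [pow_one] at hz)
      exact ⟨τ, h1, by simpa using h2, h3⟩
    | succ j ih =>
      intro z hz
      rw [pow_succ] at hz
      refine Submodule.mul_induction_on hz ?_ ?_
      · intro y hy r hr
        obtain ⟨τy, hτyT, hτyM, hey⟩ := ih y hy
        obtain ⟨τr, hτrT, hτrM, her⟩ := claimD r hr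
        refine ⟨τy * τr, T.mul_mem hτyT hτrT, ?_, ?_⟩
        · have := Ideal.mul_mem_mul hτyM hτrM
          exact cast (congrArg (fun I : Ideal (Bq k h N) => τy * τr ∈ I) (pow_succ M (j + 1)).symm) this
        · have hid : y * r - τy * τr = (y - τy) * r + τy * (r - τr) := by ring
          rw [hid]
          refine Ideal.add_mem _ ?_ ?_
          · rw [show j + 1 + 2 = (j + 2) + 1 by omega]
            have := Ideal.mul_mem_mul hey hr
            exact cast (congrArg (fun I : Ideal (Bq k h N) => (y - τy) * r ∈ I) (pow_succ M (j + 2)).symm) this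
          · rw [show j + 1 + 2 = (j + 1) + 2 by omega]
            have := Ideal.mul_mem_mul hτyM her
            exact cast (congrArg (fun I : Ideal (Bq k h N) => τy * (r - τr) ∈ I) (pow_add M (j + 1) 2).symm) this
      · intro a b ha hb
        obtain ⟨τa, h1, h2, h3⟩ := ha
        obtain ⟨τb, h4, h5, h6⟩ := hb
        refine ⟨τa + τb, T.add_mem h1 h4, Ideal.add_mem _ h2 h5, ?_⟩
        have : a + b - (τa + τb) = (a - τa) + (b - τb) := by ring
        rw [this]
        exact Ideal.add_mem _ h3 h6
  have claimQ : ∀ d j, N ≤ d + (j + 1) → ∀ z ∈ M ^ (j + 1), z ∈ T := by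
    intro d
    induction d with
    | zero =>
      intro j hN z hz
      have hle : M ^ (j + 1) ≤ M ^ N := Ideal.pow_le_pow_right (by omega)
      have hz' := hle hz
      rw [hM, MB_pow_eq_bot] at hz'
      have hz0 : z = 0 := by simpa using hz'
      rw [hz0]
      exact T.zero_mem
    | succ d ihd =>
      intro j hN z hz
      obtain ⟨τ, hτT, _, he⟩ := claimP j z hz
      have h2 : z - τ ∈ T := by
        refine ihd (j + 1) (by omega) _ ?_
        rwa [show j + 1 + 1 = j + 2 by omega]
      have h3 : z = τ + (z - τ) := by ring
      rw [h3]
      exact T.add_mem hτT h2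
  intro b
  obtain ⟨c, hc⟩ := res_mkB (N := N) (h := h) b
  have h1 : b - algebraMap k (Bq k h N) c ∈ T := by
    refine claimQ N 0 (by omega) _ ?_
    simpa using hc
  have h2 : b = algebraMap k (Bq k h N) c + (b - algebraMap k (Bq k h N) c) := by ring
  have hbT : b ∈ T := by
    rw [h2]
    exact T.add_mem (halgT c) h1
  exact hbT

lemma finite_Bq (hh : 0 < h) : Module.Finite k (Bq k h N) := by
  classical
  set Tfin : Finset (Bq k h N) :=
    Finset.image
      (fun dfun : Fin h → Fin (N + 1) =>
        Ideal.Quotient.mk (nIdeal k h ^ N)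
          (MvPowerSeries.monomial (R := k) (Finsupp.equivFunOnFinite.symm fun i => (dfun i : ℕ)) 1))
      Finset.univ with hTfin
  have hsm : ∀ (c : k) (x : MvPowerSeries (Fin h) k),
      Ideal.Quotient.mk (nIdeal k h ^ N) (c • x)
        = c • Ideal.Quotient.mk (nIdeal k h ^ N) x := by
    intro c x
    rw [Algebra.smul_def, map_mul,
      show (Ideal.Quotient.mk (nIdeal k h ^ N)) (algebraMap k _ c)
        = algebraMap k (Bq k h N) c from rfl, ← Algebra.smul_def]
  have hspan : ∀ b : Bq k h N, b ∈ Submodule.span k (Tfin : Set (Bq k h N)) := by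
    intro b
    obtain ⟨f, rfl⟩ := Ideal.Quotient.mk_surjective b
    set nb : Fin h →₀ ℕ := Finsupp.equivFunOnFinite.symm (fun _ => N) with hnb
    set p := MvPowerSeries.trunc k nb f with hp
    have happrox : Ideal.Quotient.mk (nIdeal k h ^ N) f
        = Ideal.Quotient.mk (nIdeal k h ^ N) (↑p : MvPowerSeries (Fin h) k) := by
      rw [Ideal.Quotient.mk_eq_mk_iff_sub_mem]
      exact sub_trunc_mem hh f
    rw [happrox]
    have hcoe : (↑p : MvPowerSeries (Fin h) k)
        = ∑ v ∈ p.support, MvPowerSeries.monomial (R := k) v (MvPolynomial.coeff v p) := by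
      conv_lhs => rw [MvPolynomial.as_sum p]
      rw [show ((∑ v ∈ p.support, MvPolynomial.monomial v (MvPolynomial.coeff v p) :
          MvPolynomial (Fin h) k) : MvPowerSeries (Fin h) k)
        = MvPolynomial.coeToMvPowerSeries.ringHom
            (∑ v ∈ p.support, MvPolynomial.monomial v (MvPolynomial.coeff v p)) from rfl]
      rw [map_sum]
      apply Finset.sum_congr rfl
      intro v _
      rw [show (MvPolynomial.coeToMvPowerSeries.ringHom
          (MvPolynomial.monomial v (MvPolynomial.coeff v p)) : MvPowerSeries (Fin h) k)
        = ↑(MvPolynomial.monomial v (MvPolynomial.coeff v p)) from rfl]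
      rw [MvPolynomial.coe_monomial]
    rw [hcoe, map_sum]
    apply Submodule.sum_mem
    intro v hv
    have hv' : ∀ i, v i ≤ N := by
      intro i
      have hne := MvPolynomial.mem_support_iff.mp hv
      rw [hp, MvPowerSeries.coeff_trunc] at hne
      by_cases hlt : v < nb
      · have := hlt.1 i
        have h2 : nb i = N := by simp [hnb]
        omega
      · rw [if_neg hlt] at hne
        exact absurd rfl hne
    have hmono : MvPowerSeries.monomial (R := k) v (MvPolynomial.coeff v p)
        = (MvPolynomial.coeff v p) • MvPowerSeries.monomial (R := k) v 1 := by
      rw [← map_smul]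
      congr 1
      simp
    rw [hmono, hsm]
    apply Submodule.smul_mem
    apply Submodule.subset_span
    rw [hTfin]
    refine Finset.mem_coe.mpr (Finset.mem_image.mpr
      ⟨fun i => (⟨v i, by have := hv' i; omega⟩ : Fin (N + 1)), Finset.mem_univ _, ?_⟩)
    congr 2
    have heq : (fun i => (((⟨v i, by have := hv' i; omega⟩ : Fin (N + 1))) : ℕ)) = ⇑v := by
      funext i; rfl
    rw [heq, Finsupp.equivFunOnFinite_symm_coe]
  refine ⟨⟨Tfin, ?_⟩⟩
  rw [eq_top_iff]
  intro b _
  exact hspan b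

end Bsetup

section MapIpz

set_option maxHeartbeats 1600000
set_option synthInstance.maxHeartbeats 400000

variable {k : Type*} [Field k] {n s t r : ℕ}

lemma pow_sub_algebraMap_mem {B : Type*} [CommRing B] [Algebra k B] (M : Ideal B)
    {ρ : B} {γ : k} (hργ : ρ - algebraMap k B γ ∈ M) :
    ∀ j, ρ ^ j - algebraMap k B (γ ^ j) ∈ M := by
  intro j
  induction j with
  | zero => simp
  | succ j ih =>
    have hid : ρ ^ (j + 1) - algebraMap k B (γ ^ (j + 1))
        = ρ * (ρ ^ j - algebraMap k B (γ ^ j))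
          + algebraMap k B (γ ^ j) * (ρ - algebraMap k B γ) := by
      rw [pow_succ, pow_succ, map_mul]
      ring
    rw [hid]
    exact Ideal.add_mem _ (Ideal.mul_mem_left _ _ ih) (Ideal.mul_mem_left _ _ hργ)

lemma map_Ipz_eq (hst : t + 1 ≤ s) (w : MvPowerSeries (Fin (n + 2)) k)
    (φ : Bq k (n + 2) (s + 2) →ₐ[k] Bq k (n + 2) (s + 2))
    (ρ : Bq k (n + 2) (s + 2)) (hρ : IsUnit ρ)
    (hφ0 : φ (Ideal.Quotient.mk (nIdeal k (n + 2) ^ (s + 2)) (X 0))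
      = ρ ^ 2 * Ideal.Quotient.mk (nIdeal k (n + 2) ^ (s + 2)) (X 0))
    (hφ1 : φ (Ideal.Quotient.mk (nIdeal k (n + 2) ^ (s + 2)) (X 1))
      = ρ ^ (2 * (r + 1)) * Ideal.Quotient.mk (nIdeal k (n + 2) ^ (s + 2)) (X 1))
    (hφj : ∀ j : Fin (n + 2), 2 ≤ (j : ℕ) →
      φ (Ideal.Quotient.mk (nIdeal k (n + 2) ^ (s + 2)) (X j))
        = ρ ^ s * Ideal.Quotient.mk (nIdeal k (n + 2) ^ (s + 2)) (X j))
    (keyid : (ρ ^ 2) ^ (s - t + 1)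
      = (ρ ^ 2) ^ (2 * (r + 1)) * Ideal.Quotient.mk (nIdeal k (n + 2) ^ (s + 2)) w) :
    Ideal.map φ (Ideal.map (Ideal.Quotient.mk (nIdeal k (n + 2) ^ (s + 2))) (Ipz k n s t r 1))
      = Ideal.map (Ideal.Quotient.mk (nIdeal k (n + 2) ^ (s + 2))) (Ipz k n s t r w) := by
  classical
  set mkQ := Ideal.Quotient.mk (nIdeal k (n + 2) ^ (s + 2)) with hmkQ
  -- generic unit shape for the image of each variable
  have hφgen : ∀ i : Fin (n + 2), ∃ v, IsUnit v ∧ φ (mkQ (X i)) = v * mkQ (X i) := by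
    intro i
    by_cases hi0 : (i : ℕ) = 0
    · have : i = 0 := Fin.ext (by simpa using hi0)
      subst this
      exact ⟨ρ ^ 2, hρ.pow 2, hφ0⟩
    · by_cases hi1 : (i : ℕ) = 1
      · have : i = 1 := Fin.ext (by simp [hi1])
        subst this
        exact ⟨ρ ^ (2 * (r + 1)), hρ.pow _, hφ1⟩
      · exact ⟨ρ ^ s, hρ.pow _, hφj i (by omega)⟩
  have hc1 : ∀ i j : Fin (n + 2), ∃ v, IsUnit v ∧
      φ (mkQ (X i * X j)) = v * mkQ (X i * X j) := by
    intro i j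
    obtain ⟨vi, hvi, hφi⟩ := hφgen i
    obtain ⟨vj, hvj, hφj'⟩ := hφgen j
    refine ⟨vi * vj, hvi.mul hvj, ?_⟩
    simp only [map_mul]
    rw [hφi, hφj']
    ring
  have hc2 : ∀ j : Fin (n + 2), 2 ≤ (j : ℕ) →
      φ (mkQ (X j ^ 2 - X 0 ^ s)) = (ρ ^ 2) ^ s * mkQ (X j ^ 2 - X 0 ^ s) := by
    intro j hj
    simp only [map_sub, map_pow]
    rw [hφj j hj, hφ0]
    ring
  have hc3 : φ (mkQ (X 1 ^ 2 - X 0 ^ (r + 1) * X 1 - 1 * X 0 ^ (s - t + 1)))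
      = (ρ ^ 2) ^ (2 * (r + 1)) *
        mkQ (X 1 ^ 2 - X 0 ^ (r + 1) * X 1 - w * X 0 ^ (s - t + 1)) := by
    simp only [map_sub, map_mul, map_pow, map_one]
    rw [hφ0, hφ1]
    linear_combination (-(mkQ (X 0) ^ (s - t + 1))) * keyid
  have hc4 : φ (mkQ (X 0 ^ t * X 1))
      = ((ρ ^ 2) ^ t * ρ ^ (2 * (r + 1))) * mkQ (X 0 ^ t * X 1) := by
    simp only [map_mul, map_pow]
    rw [hφ0, hφ1]
    ring
  have hc2u : IsUnit ((ρ ^ 2 : Bq k (n + 2) (s + 2)) ^ s) := (hρ.pow 2).pow s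
  have hc3u : IsUnit ((ρ ^ 2 : Bq k (n + 2) (s + 2)) ^ (2 * (r + 1))) := (hρ.pow 2).pow _
  have hc4u : IsUnit ((ρ ^ 2 : Bq k (n + 2) (s + 2)) ^ t * ρ ^ (2 * (r + 1))) :=
    ((hρ.pow 2).pow t).mul (hρ.pow _)
  -- the two generating sets
  rw [show Ipz k n s t r 1 = Ideal.span
      ({f | ∃ i j : Fin (n + 2), i < j ∧ (i, j) ≠ (0, 1) ∧ f = X i * X j} ∪
       {f | ∃ j : Fin (n + 2), 2 ≤ (j : ℕ) ∧ f = X j ^ 2 - X 0 ^ s} ∪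
       {X 1 ^ 2 - X 0 ^ (r + 1) * X 1 - 1 * X 0 ^ (s - t + 1), X 0 ^ t * X 1}) from rfl]
  rw [show Ipz k n s t r w = Ideal.span
      ({f | ∃ i j : Fin (n + 2), i < j ∧ (i, j) ≠ (0, 1) ∧ f = X i * X j} ∪
       {f | ∃ j : Fin (n + 2), 2 ≤ (j : ℕ) ∧ f = X j ^ 2 - X 0 ^ s} ∪
       {X 1 ^ 2 - X 0 ^ (r + 1) * X 1 - w * X 0 ^ (s - t + 1), X 0 ^ t * X 1}) from rfl]
  rw [Ideal.map_span, Ideal.map_span, Ideal.map_span]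
  apply le_antisymm
  · rw [Ideal.span_le]
    rintro x ⟨y, ⟨gg, hgg, rfl⟩, rfl⟩
    rcases hgg with (⟨i, j, hij, hne, rfl⟩ | ⟨j, hj, rfl⟩) | (rfl | hgg)
    · obtain ⟨v, hv, hcv⟩ := hc1 i j
      rw [hcv]
      exact Ideal.mul_mem_left _ _ (Ideal.subset_span
        ⟨X i * X j, Or.inl (Or.inl ⟨i, j, hij, hne, rfl⟩), rfl⟩)
    · rw [hc2 j hj]
      exact Ideal.mul_mem_left _ _ (Ideal.subset_span
        ⟨X j ^ 2 - X 0 ^ s, Or.inl (Or.inr ⟨j, hj, rfl⟩), rfl⟩)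
    · rw [hc3]
      exact Ideal.mul_mem_left _ _ (Ideal.subset_span
        ⟨X 1 ^ 2 - X 0 ^ (r + 1) * X 1 - w * X 0 ^ (s - t + 1),
          Or.inr (Set.mem_insert _ _), rfl⟩)
    · rw [Set.mem_singleton_iff] at hgg
      subst hgg
      rw [hc4]
      exact Ideal.mul_mem_left _ _ (Ideal.subset_span
        ⟨X 0 ^ t * X 1, Or.inr (Set.mem_insert_of_mem _ rfl), rfl⟩)
  · rw [Ideal.span_le]
    rintro x ⟨gg, hgg, rfl⟩
    have hmemgen : ∀ g ∈ ({f | ∃ i j : Fin (n + 2), i < j ∧ (i, j) ≠ (0, 1) ∧ f = X i * X j} ∪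
       {f | ∃ j : Fin (n + 2), 2 ≤ (j : ℕ) ∧ f = X j ^ 2 - X 0 ^ s} ∪
       {X 1 ^ 2 - X 0 ^ (r + 1) * X 1 - 1 * X 0 ^ (s - t + 1), X 0 ^ t * X 1} :
         Set (MvPowerSeries (Fin (n + 2)) k)),
        φ (mkQ g) ∈ Ideal.span (⇑φ '' (⇑mkQ ''
          ({f | ∃ i j : Fin (n + 2), i < j ∧ (i, j) ≠ (0, 1) ∧ f = X i * X j} ∪
           {f | ∃ j : Fin (n + 2), 2 ≤ (j : ℕ) ∧ f = X j ^ 2 - X 0 ^ s} ∪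
           {X 1 ^ 2 - X 0 ^ (r + 1) * X 1 - 1 * X 0 ^ (s - t + 1), X 0 ^ t * X 1}))) := by
      intro g hgmem
      exact Ideal.subset_span ⟨mkQ g, ⟨g, hgmem, rfl⟩, rfl⟩
    have hkey : ∀ (g₁ : MvPowerSeries (Fin (n + 2)) k) (v : Bq k (n + 2) (s + 2)),
        IsUnit v → φ (mkQ g₁) = v * mkQ gg →
        (g₁ ∈ ({f | ∃ i j : Fin (n + 2), i < j ∧ (i, j) ≠ (0, 1) ∧ f = X i * X j} ∪
           {f | ∃ j : Fin (n + 2), 2 ≤ (j : ℕ) ∧ f = X j ^ 2 - X 0 ^ s} ∪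
           {X 1 ^ 2 - X 0 ^ (r + 1) * X 1 - 1 * X 0 ^ (s - t + 1), X 0 ^ t * X 1} :
             Set (MvPowerSeries (Fin (n + 2)) k))) →
        mkQ gg ∈ Ideal.span (⇑φ '' (⇑mkQ ''
          ({f | ∃ i j : Fin (n + 2), i < j ∧ (i, j) ≠ (0, 1) ∧ f = X i * X j} ∪
           {f | ∃ j : Fin (n + 2), 2 ≤ (j : ℕ) ∧ f = X j ^ 2 - X 0 ^ s} ∪
           {X 1 ^ 2 - X 0 ^ (r + 1) * X 1 - 1 * X 0 ^ (s - t + 1), X 0 ^ t * X 1}))) := by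
      intro g₁ v hv heq hg₁
      have h1 := hmemgen g₁ hg₁
      rw [heq] at h1
      have h2 : ↑hv.unit⁻¹ * (v * mkQ gg) = mkQ gg := by
        rw [← mul_assoc, hv.val_inv_mul, one_mul]
      rw [← h2]
      exact Ideal.mul_mem_left _ _ h1
    rcases hgg with (⟨i, j, hij, hne, rfl⟩ | ⟨j, hj, rfl⟩) | (rfl | hgg)
    · obtain ⟨v, hv, hcv⟩ := hc1 i j
      exact hkey (X i * X j) v hv hcv (Or.inl (Or.inl ⟨i, j, hij, hne, rfl⟩))
    · exact hkey (X j ^ 2 - X 0 ^ s) _ hc2u (hc2 j hj) (Or.inl (Or.inr ⟨j, hj, rfl⟩))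
    · exact hkey (X 1 ^ 2 - X 0 ^ (r + 1) * X 1 - 1 * X 0 ^ (s - t + 1)) _ hc3u hc3
        (Or.inr (Set.mem_insert _ _))
    · rw [Set.mem_singleton_iff] at hgg
      subst hgg
      exact hkey (X 0 ^ t * X 1) _ hc4u hc4 (Or.inr (Set.mem_insert_of_mem _ rfl))

end MapIpz

end StmtAux

end

open MvPowerSeries in
set_option maxHeartbeats 3200000 in
set_option synthInstance.maxHeartbeats 400000 in
/-- If `2(r+1) ≠ s - t + 1` and `w` is invertible, then `I_{r,w} ∼ I_{r,1}`. -/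
theorem stmt_4 {k : Type*} [Field k] [IsAlgClosed k] [CharZero k] (n s t : ℕ)
    (hst : t + 1 ≤ s) (ht : 3 ≤ t + 1)
    (r : ℕ) (hr : 2 * (r + 1) ≠ s - t + 1)
    (w : MvPowerSeries (Fin (n + 2)) k) (hw : IsUnit w) :
    IdealIso k (Ipz k n s t r w) (Ipz k n s t r 1) := by
  classical
  have hle_w : nIdeal k (n + 2) ^ (s + 2) ≤ Ipz k n s t r w :=
    StmtAux.nIdeal_pow_le hst ht hw
  have hle_1 : nIdeal k (n + 2) ^ (s + 2) ≤ Ipz k n s t r 1 :=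
    StmtAux.nIdeal_pow_le hst ht isUnit_one
  set mkQ := Ideal.Quotient.mk (nIdeal k (n + 2) ^ (s + 2)) with hmkQ
  have hwb : IsUnit (mkQ w) := hw.map mkQ
  have hcw : constantCoeff (σ := Fin (n + 2)) (R := k) w ≠ 0 :=
    (hw.map (constantCoeff (σ := Fin (n + 2)) (R := k))).ne_zero
  have halgc : ∀ c : k, algebraMap k (StmtAux.Bq k (n + 2) (s + 2)) c
      = mkQ (MvPowerSeries.C (σ := Fin (n + 2)) (R := k) c) := fun c => rfl
  have hwmem : mkQ w - algebraMap k (StmtAux.Bq k (n + 2) (s + 2))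
      (constantCoeff (σ := Fin (n + 2)) (R := k) w) ∈ StmtAux.MB k (n + 2) (s + 2) := by
    rw [halgc, ← map_sub]
    refine Ideal.mem_map_of_mem _ (StmtAux.mem_nIdeal_of_constantCoeff ?_)
    rw [map_sub]
    simp
  -- construct the root ρ with (ρ²)^(s-t+1) = (ρ²)^(2(r+1)) * w̄
  obtain ⟨ρ, hρu, ⟨γ, hγ0, hργ⟩, keyid⟩ :
      ∃ ρ : StmtAux.Bq k (n + 2) (s + 2), IsUnit ρ ∧
        (∃ γ : k, γ ≠ 0 ∧ ρ - algebraMap k _ γ ∈ StmtAux.MB k (n + 2) (s + 2)) ∧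
        (ρ ^ 2) ^ (s - t + 1) = (ρ ^ 2) ^ (2 * (r + 1)) * mkQ w := by
    rcases Nat.lt_or_ge (2 * (r + 1)) (s - t + 1) with hlt | hge
    · obtain ⟨ρ, γ, hγ0, hρpow, hργ⟩ :=
        StmtAux.exists_root (StmtAux.MB k (n + 2) (s + 2)) (s + 2) StmtAux.MB_pow_eq_bot
          (mkQ w) (constantCoeff (σ := Fin (n + 2)) (R := k) w) hcw hwmem
          (2 * ((s - t + 1) - 2 * (r + 1))) (by omega)
      refine ⟨ρ, ?_, ⟨γ, hγ0, hργ⟩, ?_⟩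
      · refine (isUnit_pow_iff (by omega : 2 * ((s - t + 1) - 2 * (r + 1)) ≠ 0)).mp ?_
        rw [hρpow]
        exact hwb
      · rw [← pow_mul, ← pow_mul, ← hρpow, ← pow_add]
        congr 1
        omega
    · have hqp : s - t + 1 < 2 * (r + 1) := by omega
      have hinvmem : (↑hwb.unit⁻¹ : StmtAux.Bq k (n + 2) (s + 2))
          - algebraMap k _ (constantCoeff (σ := Fin (n + 2)) (R := k) w)⁻¹
            ∈ StmtAux.MB k (n + 2) (s + 2) := by
        have h1 : (↑hwb.unit⁻¹ : StmtAux.Bq k (n + 2) (s + 2)) * mkQ w = 1 :=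
          hwb.val_inv_mul
        have h2 : algebraMap k (StmtAux.Bq k (n + 2) (s + 2))
            (constantCoeff (σ := Fin (n + 2)) (R := k) w)⁻¹ *
            algebraMap k _ (constantCoeff (σ := Fin (n + 2)) (R := k) w) = 1 := by
          rw [← map_mul, inv_mul_cancel₀ hcw, map_one]
        have hid : (↑hwb.unit⁻¹ : StmtAux.Bq k (n + 2) (s + 2))
            - algebraMap k _ (constantCoeff (σ := Fin (n + 2)) (R := k) w)⁻¹
          = (↑hwb.unit⁻¹ * algebraMap k _ (constantCoeff (σ := Fin (n + 2)) (R := k) w)⁻¹) *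
              (algebraMap k _ (constantCoeff (σ := Fin (n + 2)) (R := k) w) - mkQ w) := by
          linear_combination (algebraMap k (StmtAux.Bq k (n + 2) (s + 2))
              (constantCoeff (σ := Fin (n + 2)) (R := k) w)⁻¹) * h1
            - (↑hwb.unit⁻¹ : StmtAux.Bq k (n + 2) (s + 2)) * h2
        rw [hid]
        refine Ideal.mul_mem_left _ _ ?_
        have hneg : algebraMap k (StmtAux.Bq k (n + 2) (s + 2))
            (constantCoeff (σ := Fin (n + 2)) (R := k) w) - mkQ w
            = -(mkQ w - algebraMap k _ (constantCoeff (σ := Fin (n + 2)) (R := k) w)) := by ring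
        rw [hneg]
        exact neg_mem hwmem
      obtain ⟨ρ, γ, hγ0, hρpow, hργ⟩ :=
        StmtAux.exists_root (StmtAux.MB k (n + 2) (s + 2)) (s + 2) StmtAux.MB_pow_eq_bot
          (↑hwb.unit⁻¹) (constantCoeff (σ := Fin (n + 2)) (R := k) w)⁻¹ (inv_ne_zero hcw) hinvmem
          (2 * (2 * (r + 1) - (s - t + 1))) (by omega)
      refine ⟨ρ, ?_, ⟨γ, hγ0, hργ⟩, ?_⟩
      · refine (isUnit_pow_iff (by omega : 2 * (2 * (r + 1) - (s - t + 1)) ≠ 0)).mp ?_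
        rw [hρpow]
        exact (hwb.unit⁻¹).isUnit
      · have hsplit : (ρ ^ 2) ^ (2 * (r + 1))
            = (ρ ^ 2) ^ (s - t + 1) * ρ ^ (2 * (2 * (r + 1) - (s - t + 1))) := by
          rw [← pow_mul, ← pow_mul, ← pow_add]
          congr 1
          omega
        rw [hsplit, hρpow, mul_assoc]
        have h1 : (↑hwb.unit⁻¹ : StmtAux.Bq k (n + 2) (s + 2)) * mkQ w = 1 :=
          hwb.val_inv_mul
        rw [h1, mul_one]
  -- diagonal unit data
  set uf : Fin (n + 2) → StmtAux.Bq k (n + 2) (s + 2) := fun i =>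
    if (i : ℕ) = 0 then ρ ^ 2 else if (i : ℕ) = 1 then ρ ^ (2 * (r + 1)) else ρ ^ s with huf
  set γf : Fin (n + 2) → k := fun i =>
    if (i : ℕ) = 0 then γ ^ 2 else if (i : ℕ) = 1 then γ ^ (2 * (r + 1)) else γ ^ s with hγf
  have hγfne : ∀ i, γf i ≠ 0 := by
    intro i
    rw [hγf]
    dsimp only
    split_ifs <;> exact pow_ne_zero _ hγ0
  have hufmem : ∀ i, uf i - algebraMap k (StmtAux.Bq k (n + 2) (s + 2)) (γf i)
      ∈ StmtAux.MB k (n + 2) (s + 2) := by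
    intro i
    rw [huf, hγf]
    dsimp only
    split_ifs <;> exact StmtAux.pow_sub_algebraMap_mem _ hργ _
  have hval0 : uf 0 = ρ ^ 2 := by
    rw [huf]
    simp
  have hval1 : uf 1 = ρ ^ (2 * (r + 1)) := by
    rw [huf]
    simp
  have hvalj : ∀ j : Fin (n + 2), 2 ≤ (j : ℕ) → uf j = ρ ^ s := by
    intro j hj
    rw [huf]
    dsimp only
    rw [if_neg (by omega), if_neg (by omega)]
  -- the algebra endomorphism φ of B
  set gfun : Fin (n + 2) → StmtAux.Bq k (n + 2) (s + 2) :=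
    fun i => uf i * mkQ (X i) with hgfun
  have hgM : ∀ i, gfun i ∈ StmtAux.MB k (n + 2) (s + 2) := by
    intro i
    exact Ideal.mul_mem_left _ _ (StmtAux.mkB_X_mem i)
  have hkill : ∀ p ∈ RingHom.ker (StmtAux.epsA k (n + 2) (s + 2)),
      MvPolynomial.aeval (R := k) gfun p = 0 := by
    intro p hp
    exact StmtAux.aeval_vanish_on_ker gfun hgM p
      (StmtAux.mem_poly_span_pow_of_ker p (RingHom.mem_ker.mp hp))
  have hεs : Function.Surjective (StmtAux.epsA k (n + 2) (s + 2)) :=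
    StmtAux.epsA_surjective (by omega)
  set ι := Ideal.quotientKerAlgEquivOfSurjective hεs with hι
  set ψbar := Ideal.Quotient.liftₐ (RingHom.ker (StmtAux.epsA k (n + 2) (s + 2)))
    (MvPolynomial.aeval (R := k) gfun) hkill with hψbar
  set φ := ψbar.comp ι.symm.toAlgHom with hφ
  have hι_mk : ∀ p : MvPolynomial (Fin (n + 2)) k,
      ι (Ideal.Quotient.mk (RingHom.ker (StmtAux.epsA k (n + 2) (s + 2))) p)
        = StmtAux.epsA k (n + 2) (s + 2) p := by
    intro p
    rfl
  have hφeps : ∀ p : MvPolynomial (Fin (n + 2)) k,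
      φ (StmtAux.epsA k (n + 2) (s + 2) p) = MvPolynomial.aeval (R := k) gfun p := by
    intro p
    rw [← hι_mk p]
    have h1 : φ (ι (Ideal.Quotient.mk (RingHom.ker (StmtAux.epsA k (n + 2) (s + 2))) p))
        = ψbar (ι.symm (ι (Ideal.Quotient.mk
            (RingHom.ker (StmtAux.epsA k (n + 2) (s + 2))) p))) := rfl
    rw [h1, AlgEquiv.symm_apply_apply, hψbar, Ideal.Quotient.liftₐ_apply]
    rfl
  have hφX : ∀ i, φ (mkQ (X i)) = gfun i := by
    intro i
    have h1 : mkQ (X i) = StmtAux.epsA k (n + 2) (s + 2) (MvPolynomial.X i) := by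
      rw [StmtAux.epsA_apply, MvPolynomial.coe_X]
    rw [h1, hφeps, MvPolynomial.aeval_X]
  -- surjectivity and bijectivity
  have hψs : Function.Surjective (MvPolynomial.aeval (R := k) gfun) :=
    StmtAux.aeval_surjective uf γf hγfne hufmem
  have hφs : Function.Surjective φ := by
    intro b
    obtain ⟨p, hp⟩ := hψs b
    refine ⟨ι (Ideal.Quotient.mk (RingHom.ker (StmtAux.epsA k (n + 2) (s + 2))) p), ?_⟩
    rw [hι_mk p, hφeps p]
    exact hp
  haveI hfin : Module.Finite k (StmtAux.Bq k (n + 2) (s + 2)) := StmtAux.finite_Bq (by omega)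
  have hφinj : Function.Injective φ :=
    OrzechProperty.injective_of_surjective_endomorphism (R := k) φ.toLinearMap hφs
  set φe := AlgEquiv.ofBijective φ ⟨hφinj, hφs⟩ with hφe
  -- the ideal computation
  have hφ0' : φ (mkQ (X 0)) = ρ ^ 2 * mkQ (X 0) := by
    rw [hφX 0, hgfun]
    dsimp only
    rw [hval0]
  have hφ1' : φ (mkQ (X 1)) = ρ ^ (2 * (r + 1)) * mkQ (X 1) := by
    rw [hφX 1, hgfun]
    dsimp only
    rw [hval1]
  have hφj' : ∀ j : Fin (n + 2), 2 ≤ (j : ℕ) → φ (mkQ (X j)) = ρ ^ s * mkQ (X j) := by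
    intro j hj
    rw [hφX j, hgfun]
    dsimp only
    rw [hvalj j hj]
  have hmapI := StmtAux.map_Ipz_eq (k := k) (n := n) (r := r) hst w φ ρ hρu
    hφ0' hφ1' hφj' keyid
  have hmk' : ∀ J : Ideal (MvPowerSeries (Fin (n + 2)) k),
      J.map (Ideal.Quotient.mkₐ k (nIdeal k (n + 2) ^ (s + 2))) = J.map mkQ := fun _ => rfl
  have hmap2 : (Ipz k n s t r w).map (Ideal.Quotient.mkₐ k (nIdeal k (n + 2) ^ (s + 2)))
      = Ideal.map (φe : StmtAux.Bq k (n + 2) (s + 2) →+* StmtAux.Bq k (n + 2) (s + 2))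
          ((Ipz k n s t r 1).map (Ideal.Quotient.mkₐ k (nIdeal k (n + 2) ^ (s + 2)))) := by
    rw [hmk', hmk']
    rw [← hmapI]
    rfl
  have E2 := Ideal.quotientEquivAlg
    ((Ipz k n s t r 1).map (Ideal.Quotient.mkₐ k (nIdeal k (n + 2) ^ (s + 2))))
    ((Ipz k n s t r w).map (Ideal.Quotient.mkₐ k (nIdeal k (n + 2) ^ (s + 2))))
    φe hmap2
  have E1w := DoubleQuot.quotQuotEquivQuotOfLEₐ k hle_w
  have E1o := DoubleQuot.quotQuotEquivQuotOfLEₐ k hle_1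
  exact ⟨E1w.symm.trans (E2.symm.trans E1o)⟩
end

section
/- Assume s ≥ t+2 and let p ≥ 1 be an integer. Then for all invertible power series z, w ∈ R, the ideals I_{0,w} and I_{p,z} are not isomorphic, i.e. there is no k-algebra isomorphism R/I_{0,w} ≅ R/I_{p,z}. -/
noncomputable section Stmt10Aux

namespace Stmt10Aux

open MvPowerSeries Finsupp Classical

variable {k : Type*} [Field k] {σ : Type*}






lemma deg_add (a b : σ →₀ ℕ) : (a + b).degree = a.degree + b.degree := by
  simp [degree_eq_weight_one, map_add]

lemma deg_single (i : σ) (m : ℕ) : (Finsupp.single i m).degree = m := by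
  classical
  rcases eq_or_ne m 0 with rfl | hm
  · simp
  · rw [Finsupp.degree_apply, Finsupp.support_single_ne_zero _ hm, Finset.sum_singleton,
      Finsupp.single_eq_same]

lemma eq_single_of_degree_one {d : σ →₀ ℕ} (hd : d.degree = 1) :
    ∃ i, d = Finsupp.single i 1 := by
  classical
  have hne : d ≠ 0 := by
    intro h; rw [h] at hd; simp at hd
  obtain ⟨i, hi⟩ := Finsupp.support_nonempty_iff.2 hne
  have hdi : d i ≠ 0 := Finsupp.mem_support_iff.1 hi
  have hsum : d i + ∑ x ∈ d.support.erase i, d x = d.degree := Finset.add_sum_erase _ _ hi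
  have h1 : d i = 1 ∧ ∑ x ∈ d.support.erase i, d x = 0 := by omega
  refine ⟨i, ?_⟩
  ext j
  rcases eq_or_ne j i with rfl | hji
  · simp [h1.1]
  · rw [Finsupp.single_eq_of_ne' (Ne.symm hji)]
    by_cases hj : j ∈ d.support
    · exact (Finset.sum_eq_zero_iff.1 h1.2) j (Finset.mem_erase.2 ⟨hji, hj⟩)
    · exact Finsupp.notMem_support_iff.1 hj

lemma coeff_mul_eq_zero {f g : MvPowerSeries σ k} {a b : ℕ}
    (hf : ∀ d : σ →₀ ℕ, d.degree < a → coeff d f = 0)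
    (hg : ∀ d : σ →₀ ℕ, d.degree < b → coeff d g = 0)
    {d : σ →₀ ℕ} (hd : d.degree < a + b) : coeff d (f * g) = 0 := by
  classical
  rw [coeff_mul]
  apply Finset.sum_eq_zero
  intro p hp
  rw [Finset.HasAntidiagonal.mem_antidiagonal] at hp
  have hdeg : p.1.degree + p.2.degree < a + b := by rw [← deg_add, hp]; exact hd
  rcases lt_or_ge p.1.degree a with h | h
  · rw [hf _ h, zero_mul]
  · rw [hg _ (by omega), mul_zero]

lemma coeff_smul_top {f r : MvPowerSeries σ k} {b : ℕ}
    (hf : ∀ d : σ →₀ ℕ, d.degree < b → coeff d f = 0)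
    {d : σ →₀ ℕ} (hd : d.degree = b) :
    coeff d (r * f) = constantCoeff r * coeff d f := by
  classical
  rw [coeff_mul]
  rw [Finset.sum_eq_single (0, d)]
  · rw [coeff_zero_eq_constantCoeff]
  · intro p hp hne
    rw [Finset.HasAntidiagonal.mem_antidiagonal] at hp
    rcases lt_or_ge p.2.degree b with h | h
    · rw [hf _ h, mul_zero]
    · exfalso
      have hdeg : p.1.degree + p.2.degree = b := by rw [← deg_add, hp, hd]
      have h1 : p.1.degree = 0 := by omega
      have h2 : p.1 = 0 := (Finsupp.degree_eq_zero_iff _).1 h1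
      apply hne
      have : p.2 = d := by rw [← hp, h2, zero_add]
      rw [Prod.ext_iff]
      exact ⟨h2, this⟩
  · intro hmem
    exfalso
    exact hmem (Finset.HasAntidiagonal.mem_antidiagonal.2 (zero_add d))

/-- The ideal of power series whose coefficients vanish in degrees `< m`. -/
def lowVanish (k : Type*) [Field k] (σ : Type*) (m : ℕ) : Ideal (MvPowerSeries σ k) where
  carrier := {f | ∀ d : σ →₀ ℕ, d.degree < m → coeff d f = 0}
  add_mem' := by
    intro a b ha hb d hd
    rw [map_add, ha d hd, hb d hd, add_zero]
  zero_mem' := by intro d hd; rw [map_zero]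
  smul_mem' := by
    intro r f hf d hd
    rw [smul_eq_mul]
    exact coeff_mul_eq_zero (fun d h => absurd h (Nat.not_lt_zero _)) hf
      (by rw [zero_add]; exact hd)

lemma mem_lowVanish {m : ℕ} {f : MvPowerSeries σ k} :
    f ∈ lowVanish k σ m ↔ ∀ d : σ →₀ ℕ, d.degree < m → coeff d f = 0 := Iff.rfl

lemma monomial_mem_lowVanish {m : ℕ} {e : σ →₀ ℕ} (he : m ≤ e.degree) (c : k) :
    monomial e c ∈ lowVanish k σ m := by
  intro d hd
  apply coeff_monomial_ne
  intro h; rw [h] at hd; omega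

lemma mul_mem_lowVanish {a b : ℕ} {f g : MvPowerSeries σ k}
    (hf : f ∈ lowVanish k σ a) (hg : g ∈ lowVanish k σ b) :
    f * g ∈ lowVanish k σ (a + b) :=
  fun _ hd => coeff_mul_eq_zero hf hg hd

lemma lowVanish_mono {a b : ℕ} (hab : a ≤ b) :
    lowVanish k σ b ≤ lowVanish k σ a := fun _ hf d hd => hf d (by omega)

lemma mem_lowVanish_one {f : MvPowerSeries σ k} (hf : constantCoeff f = 0) :
    f ∈ lowVanish k σ 1 := by
  intro d hd
  have : d = 0 := (Finsupp.degree_eq_zero_iff _).1 (by omega)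
  rw [this, coeff_zero_eq_constantCoeff]
  exact hf


-- key structural fact for degree-2 antidiagonal terms
lemma antidiag_deg2 {f g : MvPowerSeries σ k}
    (hf : constantCoeff f = 0) (hg : constantCoeff g = 0)
    {d p1 p2 : σ →₀ ℕ} (hd : d.degree = 2) (hp : p1 + p2 = d)
    (hne : coeff p1 f * coeff p2 g ≠ 0) :
    ∃ a b, p1 = Finsupp.single a 1 ∧ p2 = Finsupp.single b 1 := by
  have h1 : p1 ≠ 0 := by
    rintro rfl
    rw [coeff_zero_eq_constantCoeff, hf, zero_mul] at hne; exact hne rfl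
  have h2 : p2 ≠ 0 := by
    rintro rfl
    rw [coeff_zero_eq_constantCoeff, hg, mul_zero] at hne; exact hne rfl
  have hdeg : p1.degree + p2.degree = 2 := by rw [← deg_add, hp, hd]
  have hd1 : p1.degree ≠ 0 := fun h => h1 ((Finsupp.degree_eq_zero_iff _).1 h)
  have hd2 : p2.degree ≠ 0 := fun h => h2 ((Finsupp.degree_eq_zero_iff _).1 h)
  obtain ⟨a, ha⟩ := eq_single_of_degree_one (show p1.degree = 1 by omega)
  obtain ⟨b, hb⟩ := eq_single_of_degree_one (show p2.degree = 1 by omega)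
  exact ⟨a, b, ha, hb⟩

lemma left_ne_zero_of_single_add {a b : σ} {d : σ →₀ ℕ}
    (h : Finsupp.single a 1 + Finsupp.single b 1 = d) : d a ≠ 0 := by
  intro h0
  rw [← h, Finsupp.add_apply, Finsupp.single_eq_same] at h0
  omega

lemma right_ne_zero_of_single_add {a b : σ} {d : σ →₀ ℕ}
    (h : Finsupp.single a 1 + Finsupp.single b 1 = d) : d b ≠ 0 := by
  intro h0
  rw [← h, Finsupp.add_apply, Finsupp.single_eq_same] at h0
  omega

lemma coeff_mul_sq (i : σ) {f g : MvPowerSeries σ k}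
    (hf : constantCoeff f = 0) (hg : constantCoeff g = 0) :
    coeff (Finsupp.single i 2) (f * g) =
      coeff (Finsupp.single i 1) f * coeff (Finsupp.single i 1) g := by
  classical
  have hmem : ((Finsupp.single i 1 : σ →₀ ℕ), (Finsupp.single i 1 : σ →₀ ℕ)) ∈
      Finset.HasAntidiagonal.antidiagonal (Finsupp.single i 2) := by
    rw [Finset.HasAntidiagonal.mem_antidiagonal]
    ext j
    simp [Finsupp.single_apply]
    split_ifs <;> omega
  have hzero : ∀ p ∈ Finset.HasAntidiagonal.antidiagonal (Finsupp.single i 2 : σ →₀ ℕ),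
      p ≠ (Finsupp.single i 1, Finsupp.single i 1) → coeff p.1 f * coeff p.2 g = 0 := by
    rintro ⟨p1, p2⟩ hp hpne
    by_contra hne
    rw [Finset.HasAntidiagonal.mem_antidiagonal] at hp
    obtain ⟨a, b, ha, hb⟩ := antidiag_deg2 hf hg (by rw [deg_single]) hp hne
    subst ha hb
    have hab : Finsupp.single a 1 + Finsupp.single b 1 = Finsupp.single i 2 := hp
    have hai : a = i := by
      by_contra hai
      have h0 := left_ne_zero_of_single_add hab
      rw [Finsupp.single_eq_of_ne' (fun hh => hai hh.symm)] at h0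
      exact h0 rfl
    have hbi : b = i := by
      by_contra hbi
      have h0 := right_ne_zero_of_single_add hab
      rw [Finsupp.single_eq_of_ne' (fun hh => hbi hh.symm)] at h0
      exact h0 rfl
    subst hai hbi
    exact hpne rfl
  rw [coeff_mul, Finset.sum_eq_single_of_mem _ hmem hzero]

lemma coeff_mul_single_single {i j : σ} (hij : i ≠ j) {f g : MvPowerSeries σ k}
    (hf : constantCoeff f = 0) (hg : constantCoeff g = 0) :
    coeff (Finsupp.single i 1 + Finsupp.single j 1) (f * g) =
      coeff (Finsupp.single i 1) f * coeff (Finsupp.single j 1) g +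
      coeff (Finsupp.single j 1) f * coeff (Finsupp.single i 1) g := by
  classical
  have hdd : ((Finsupp.single i 1 : σ →₀ ℕ) + Finsupp.single j 1).degree = 2 := by
    rw [deg_add, deg_single, deg_single]
  have hpairne : ((Finsupp.single i 1 : σ →₀ ℕ), (Finsupp.single j 1 : σ →₀ ℕ)) ≠
      (Finsupp.single j 1, Finsupp.single i 1) := by
    intro hEq
    have := DFunLike.congr_fun (congrArg Prod.fst hEq) i
    simp [Finsupp.single_apply, hij, Ne.symm hij] at this
  have hsub : ({(Finsupp.single i 1, Finsupp.single j 1),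
              (Finsupp.single j 1, Finsupp.single i 1)} : Finset ((σ →₀ ℕ) × (σ →₀ ℕ))) ⊆
            Finset.HasAntidiagonal.antidiagonal (Finsupp.single i 1 + Finsupp.single j 1) := by
    intro p hp
    rw [Finset.mem_insert, Finset.mem_singleton] at hp
    rcases hp with rfl | rfl
    · exact Finset.HasAntidiagonal.mem_antidiagonal.2 rfl
    · exact Finset.HasAntidiagonal.mem_antidiagonal.2 (add_comm _ _)
  have hout : ∀ p ∈ Finset.HasAntidiagonal.antidiagonal ((Finsupp.single i 1 : σ →₀ ℕ) + Finsupp.single j 1),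
      p ∉ ({(Finsupp.single i 1, Finsupp.single j 1),
            (Finsupp.single j 1, Finsupp.single i 1)} : Finset ((σ →₀ ℕ) × (σ →₀ ℕ))) →
      coeff p.1 f * coeff p.2 g = 0 := by
    rintro ⟨p1, p2⟩ hp hpnot
    by_contra hne
    rw [Finset.HasAntidiagonal.mem_antidiagonal] at hp
    obtain ⟨a, b, ha, hb⟩ := antidiag_deg2 hf hg hdd hp hne
    subst ha hb
    apply hpnot
    rw [Finset.mem_insert, Finset.mem_singleton]
    have hab : Finsupp.single a 1 + Finsupp.single b 1 =
        Finsupp.single i 1 + Finsupp.single j 1 := hp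
    have hmema : a = i ∨ a = j := by
      by_contra hcon
      push_neg at hcon
      have h0 := left_ne_zero_of_single_add hab
      rw [Finsupp.add_apply, Finsupp.single_eq_of_ne' (fun hh => hcon.1 hh.symm),
        Finsupp.single_eq_of_ne' (fun hh => hcon.2 hh.symm)] at h0
      exact h0 rfl
    rcases hmema with rfl | rfl
    · left
      have hbj : b = j := by
        by_contra hbj
        have := DFunLike.congr_fun hab j
        rw [Finsupp.add_apply, Finsupp.add_apply, Finsupp.single_eq_of_ne' hij,
          Finsupp.single_eq_of_ne' (fun hh => hbj hh), Finsupp.single_eq_same] at this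
        omega
      rw [hbj]
    · right
      have hbi : b = i := by
        by_contra hbi
        have := DFunLike.congr_fun hab i
        rw [Finsupp.add_apply, Finsupp.add_apply, Finsupp.single_eq_of_ne' (Ne.symm hij),
          Finsupp.single_eq_of_ne' (fun hh => hbi hh), Finsupp.single_eq_same] at this
        omega
      rw [hbi]
  rw [coeff_mul, ← Finset.sum_subset hsub hout, Finset.sum_pair hpairne]


lemma decomp {h : ℕ} (f : MvPowerSeries (Fin h) k) (hf : constantCoeff f = 0) :
    ∃ g : Fin h → MvPowerSeries (Fin h) k,
      f = ∑ i, X i * g i ∧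
      ∀ i, constantCoeff (g i) = coeff (Finsupp.single i 1) f := by
  classical
  set g : Fin h → MvPowerSeries (Fin h) k := fun i =>
    (fun e => if ∀ j, j < i → e j = 0 then coeff (e + Finsupp.single i 1) f else 0 :
      (Fin h →₀ ℕ) → k) with hg
  have hgcoeff : ∀ i e, coeff e (g i) =
      if ∀ j, j < i → e j = 0 then coeff (e + Finsupp.single i 1) f else 0 := fun i e => rfl
  refine ⟨g, ?_, ?_⟩
  · apply MvPowerSeries.ext
    intro d
    rw [map_sum]
    have hterm : ∀ i : Fin h, coeff d (X i * g i) =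
        if d i ≠ 0 ∧ ∀ j, j < i → d j = 0 then coeff d f else 0 := by
      intro i
      rw [X, coeff_monomial_mul]
      by_cases hle : Finsupp.single i 1 ≤ d
      · rw [if_pos hle, one_mul, hgcoeff]
        have hdi : d i ≠ 0 := by
          have := Finsupp.single_le_iff.1 hle
          omega
        have hsub : ∀ j : Fin h, j < i → ((d - Finsupp.single i 1 : Fin h →₀ ℕ) j) = d j := by
          intro j hj
          rw [Finsupp.tsub_apply, Finsupp.single_eq_of_ne' (Ne.symm (ne_of_lt hj)),
            Nat.sub_zero]
        have hcond : (∀ j, j < i → ((d - Finsupp.single i 1 : Fin h →₀ ℕ) j) = 0) ↔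
            (∀ j, j < i → d j = 0) :=
          ⟨fun H j hj => by rw [← hsub j hj]; exact H j hj,
           fun H j hj => by rw [hsub j hj]; exact H j hj⟩
        rw [if_congr hcond (by rw [tsub_add_cancel_of_le hle]) rfl,
          if_congr (Iff.symm (and_iff_right hdi)) rfl rfl]
      · rw [if_neg hle]
        have hdi : d i = 0 := by
          by_contra hdi
          exact hle (Finsupp.single_le_iff.2 (by omega))
        rw [if_neg]
        rintro ⟨h1, -⟩
        exact h1 hdi
    rw [Finset.sum_congr rfl (fun i _ => hterm i)]
    by_cases hd0 : d = 0
    · subst hd0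
      rw [coeff_zero_eq_constantCoeff_apply, hf]
      apply (Finset.sum_eq_zero ?_).symm
      intro i _
      rw [if_neg]
      rintro ⟨h1, -⟩
      exact h1 rfl
    · have hsupp : d.support.Nonempty := Finsupp.support_nonempty_iff.2 hd0
      set i₀ := d.support.min' hsupp with hi₀
      have huniq : ∀ i : Fin h, (d i ≠ 0 ∧ ∀ j, j < i → d j = 0) ↔ i = i₀ := by
        intro i
        constructor
        · rintro ⟨h1, h2⟩
          have hle : i₀ ≤ i := Finset.min'_le _ _ (Finsupp.mem_support_iff.2 h1)
          rcases eq_or_lt_of_le hle with heq | hlt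
          · exact heq.symm
          · exact absurd (h2 i₀ hlt)
              (Finsupp.mem_support_iff.1 (Finset.min'_mem _ hsupp))
        · rintro rfl
          refine ⟨Finsupp.mem_support_iff.1 (Finset.min'_mem _ hsupp), fun j hj => ?_⟩
          by_contra hj0
          exact absurd (Finset.min'_le _ _ (Finsupp.mem_support_iff.2 hj0)) (not_le.2 hj)
      rw [Finset.sum_congr rfl (fun i _ => if_congr (huniq i) rfl rfl),
        Finset.sum_ite_eq' Finset.univ i₀ (fun _ => coeff d f), if_pos (Finset.mem_univ _)]
  · intro i
    rw [← coeff_zero_eq_constantCoeff_apply, hgcoeff]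
    simp


end Stmt10Aux

noncomputable section Chunk4

namespace Stmt10Aux

open MvPowerSeries Finsupp Classical

variable {k : Type*} [Field k] {σ : Type*} {n : ℕ}

lemma fin_zero_ne_one : (0 : Fin (n + 2)) ≠ 1 := by
  intro h
  have := congrArg Fin.val h
  rw [Fin.val_zero, Fin.val_one] at this
  omega

lemma fin_ne_zero_of_two_le {j : Fin (n + 2)} (hj : 2 ≤ (j : ℕ)) : j ≠ 0 := by
  intro h; rw [h, Fin.val_zero] at hj; omega

lemma fin_ne_one_of_two_le {j : Fin (n + 2)} (hj : 2 ≤ (j : ℕ)) : j ≠ 1 := by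
  intro h; rw [h, Fin.val_one] at hj; omega

lemma eq_of_single_add_single_eq_single_two {a b i : σ}
    (h : Finsupp.single a 1 + Finsupp.single b 1 = Finsupp.single i 2) : a = i ∧ b = i := by
  constructor
  · by_contra hai
    have h0 := left_ne_zero_of_single_add h
    rw [Finsupp.single_eq_of_ne' (fun hh => hai hh.symm)] at h0
    exact h0 rfl
  · by_contra hbi
    have h0 := right_ne_zero_of_single_add h
    rw [Finsupp.single_eq_of_ne' (fun hh => hbi hh.symm)] at h0
    exact h0 rfl

lemma mem01_of_single_add_single_eq {a i j : σ} {b : σ}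
    (h : Finsupp.single a 1 + Finsupp.single b 1 = Finsupp.single i 1 + Finsupp.single j 1) :
    a = i ∨ a = j := by
  by_contra hc
  push_neg at hc
  have h0 := left_ne_zero_of_single_add h
  rw [Finsupp.add_apply, Finsupp.single_eq_of_ne' (fun hh => hc.1 hh.symm),
    Finsupp.single_eq_of_ne' (fun hh => hc.2 hh.symm)] at h0
  exact h0 rfl

lemma mem01_of_single_add_single_eq' {b i j : σ} {a : σ}
    (h : Finsupp.single a 1 + Finsupp.single b 1 = Finsupp.single i 1 + Finsupp.single j 1) :
    b = i ∨ b = j := by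
  by_contra hc
  push_neg at hc
  have h0 := right_ne_zero_of_single_add h
  rw [Finsupp.add_apply, Finsupp.single_eq_of_ne' (fun hh => hc.1 hh.symm),
    Finsupp.single_eq_of_ne' (fun hh => hc.2 hh.symm)] at h0
  exact h0 rfl

/-- The test ideal for the `p ≥ 1` side. -/
def UB (k : Type*) [Field k] (n : ℕ) : Ideal (MvPowerSeries (Fin (n + 2)) k) where
  carrier := {f | (∀ d : Fin (n + 2) →₀ ℕ, d.degree < 2 → coeff d f = 0) ∧
    coeff (Finsupp.single 0 1 + Finsupp.single 1 1) f = 0}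
  add_mem' := by
    rintro a b ⟨ha1, ha2⟩ ⟨hb1, hb2⟩
    exact ⟨fun d hd => by rw [map_add, ha1 d hd, hb1 d hd, add_zero],
      by rw [map_add, ha2, hb2, add_zero]⟩
  zero_mem' := ⟨fun d hd => map_zero _, map_zero _⟩
  smul_mem' := by
    rintro r f ⟨hf1, hf2⟩
    rw [smul_eq_mul]
    refine ⟨fun d hd => coeff_mul_eq_zero (a := 0)
      (fun d h => absurd h (Nat.not_lt_zero _)) hf1 (by omega), ?_⟩
    rw [coeff_smul_top hf1 (by rw [deg_add, deg_single, deg_single]), hf2, mul_zero]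

/-- The test ideal for the `p = 0` side. -/
def UA (k : Type*) [Field k] (n : ℕ) : Ideal (MvPowerSeries (Fin (n + 2)) k) where
  carrier := {f | (∀ d : Fin (n + 2) →₀ ℕ, d.degree < 2 → coeff d f = 0) ∧
    coeff (Finsupp.single 0 2) f = 0 ∧
    coeff (Finsupp.single 1 2) f + coeff (Finsupp.single 0 1 + Finsupp.single 1 1) f = 0}
  add_mem' := by
    rintro a b ⟨ha1, ha2, ha3⟩ ⟨hb1, hb2, hb3⟩
    refine ⟨fun d hd => by rw [map_add, ha1 d hd, hb1 d hd, add_zero],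
      by rw [map_add, ha2, hb2, add_zero], ?_⟩
    rw [map_add, map_add]
    have : coeff (Finsupp.single 1 2) a + coeff (Finsupp.single 1 2) b +
        (coeff (Finsupp.single 0 1 + Finsupp.single 1 1) a +
         coeff (Finsupp.single 0 1 + Finsupp.single 1 1) b) =
        (coeff (Finsupp.single 1 2) a + coeff (Finsupp.single 0 1 + Finsupp.single 1 1) a) +
        (coeff (Finsupp.single 1 2) b + coeff (Finsupp.single 0 1 + Finsupp.single 1 1) b) := by
      ring
    rw [this, ha3, hb3, add_zero]
  zero_mem' := ⟨fun d hd => map_zero _, map_zero _, by rw [map_zero, map_zero, add_zero]⟩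
  smul_mem' := by
    rintro r f ⟨hf1, hf2, hf3⟩
    rw [smul_eq_mul]
    refine ⟨fun d hd => coeff_mul_eq_zero (a := 0)
      (fun d h => absurd h (Nat.not_lt_zero _)) hf1 (by omega), ?_, ?_⟩
    · rw [coeff_smul_top hf1 (by rw [deg_single]), hf2, mul_zero]
    · rw [coeff_smul_top hf1 (by rw [deg_single]),
        coeff_smul_top hf1 (by rw [deg_add, deg_single, deg_single]), ← mul_add, hf3, mul_zero]

/-- The ideal generated by triple products of elements with zero constant term. -/
def JR (k : Type*) [Field k] (σ : Type*) : Ideal (MvPowerSeries σ k) :=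
  Ideal.span {u | ∃ a b c : MvPowerSeries σ k, constantCoeff a = 0 ∧
    constantCoeff b = 0 ∧ constantCoeff c = 0 ∧ u = a * b * c}

lemma JR_le_lowVanish : JR k σ ≤ lowVanish k σ 3 := by
  rw [JR, Ideal.span_le]
  rintro u ⟨a, b, c, ha, hb, hc, rfl⟩
  exact mul_mem_lowVanish (mul_mem_lowVanish (mem_lowVanish_one ha) (mem_lowVanish_one hb))
    (mem_lowVanish_one hc)

lemma lowVanish_le_UB : lowVanish k (Fin (n + 2)) 3 ≤ UB k n := by
  intro f hf
  exact ⟨fun d hd => hf d (by omega), hf _ (by rw [deg_add, deg_single, deg_single]; omega)⟩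

lemma lowVanish_le_UA : lowVanish k (Fin (n + 2)) 3 ≤ UA k n := by
  intro f hf
  refine ⟨fun d hd => hf d (by omega), hf _ (by rw [deg_single]; omega), ?_⟩
  rw [hf _ (by rw [deg_single]; omega),
    hf _ (by rw [deg_add, deg_single, deg_single]; omega), add_zero]

end Stmt10Aux

end Chunk4

noncomputable section Chunk5

namespace Stmt10Aux

open MvPowerSeries Finsupp Classical

variable {k : Type*} [Field k] {n : ℕ}

lemma X_mul_X_eq (i j : Fin (n + 2)) :
    (X i : MvPowerSeries (Fin (n + 2)) k) * X j =
      monomial (Finsupp.single i 1 + Finsupp.single j 1) 1 := by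
  rw [X_def, X_def, monomial_mul_monomial, one_mul]

lemma X_pow_mul_X_eq (m : ℕ) :
    (X 0 : MvPowerSeries (Fin (n + 2)) k) ^ m * X 1 =
      monomial (Finsupp.single 0 m + Finsupp.single 1 1) 1 := by
  rw [X_pow_eq, X_def, monomial_mul_monomial, one_mul]

lemma single_two_ne : (Finsupp.single (0 : Fin (n + 2)) 2 : Fin (n + 2) →₀ ℕ) ≠
    Finsupp.single 1 2 := by
  intro heq
  have := DFunLike.congr_fun heq 0
  rw [Finsupp.single_eq_same, Finsupp.single_eq_of_ne' (Ne.symm fin_zero_ne_one)] at this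
  omega

lemma e01_ne_single_one_two :
    (Finsupp.single (0 : Fin (n + 2)) 1 + Finsupp.single 1 1 : Fin (n + 2) →₀ ℕ) ≠
      Finsupp.single 1 2 := by
  intro heq
  exact fin_zero_ne_one (eq_of_single_add_single_eq_single_two heq).1

lemma Ipz_le_UB (s t p : ℕ) (hs3 : 3 ≤ s) (ht2 : 2 ≤ t) (hst : t + 2 ≤ s) (hp : 1 ≤ p)
    (z : MvPowerSeries (Fin (n + 2)) k) : Ipz k n s t p z ≤ UB k n := by
  rw [Ipz, Iy, Ideal.span_le]
  rintro f hf
  rcases hf with ((⟨i, j, hij, hne, rfl⟩ | ⟨j, hj, rfl⟩) | hf)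
  · rw [X_mul_X_eq]
    refine ⟨fun d hd => coeff_monomial_ne
      (fun heq => by rw [heq, deg_add, deg_single, deg_single] at hd; omega) 1, ?_⟩
    apply coeff_monomial_ne
    intro heq
    have hi := mem01_of_single_add_single_eq heq.symm
    have hj2 := mem01_of_single_add_single_eq' heq.symm
    rcases hi with rfl | rfl <;> rcases hj2 with rfl | rfl
    · exact absurd hij (lt_irrefl _)
    · exact hne rfl
    · rw [Fin.lt_def, Fin.val_zero, Fin.val_one] at hij; omega
    · exact absurd hij (lt_irrefl _)
  · have hj0 := fin_ne_zero_of_two_le hj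
    rw [X_pow_eq, X_pow_eq]
    apply sub_mem
    · refine ⟨fun d hd => coeff_monomial_ne
        (fun heq => by rw [heq, deg_single] at hd; omega) 1, ?_⟩
      apply coeff_monomial_ne
      intro heq
      exact hj0 (eq_of_single_add_single_eq_single_two heq).1.symm
    · exact lowVanish_le_UB (monomial_mem_lowVanish (by rw [deg_single]; omega) 1)
  · simp only [Set.mem_insert_iff, Set.mem_singleton_iff] at hf
    rcases hf with rfl | rfl
    · rw [X_pow_eq, X_pow_mul_X_eq]
      apply sub_mem
      apply sub_mem
      · refine ⟨fun d hd => coeff_monomial_ne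
          (fun heq => by rw [heq, deg_single] at hd; omega) 1, ?_⟩
        exact coeff_monomial_ne e01_ne_single_one_two 1
      · exact lowVanish_le_UB (monomial_mem_lowVanish
          (by rw [deg_add, deg_single, deg_single]; omega) 1)
      · apply lowVanish_le_UB
        rw [X_pow_eq]
        exact Ideal.mul_mem_left _ z (monomial_mem_lowVanish (by rw [deg_single]; omega) 1)
    · rw [X_pow_mul_X_eq]
      exact lowVanish_le_UB (monomial_mem_lowVanish
        (by rw [deg_add, deg_single, deg_single]; omega) 1)

lemma Ipz_le_UA (s t : ℕ) (hs3 : 3 ≤ s) (ht2 : 2 ≤ t) (hst : t + 2 ≤ s)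
    (w : MvPowerSeries (Fin (n + 2)) k) : Ipz k n s t 0 w ≤ UA k n := by
  rw [Ipz, Iy, Ideal.span_le]
  rintro f hf
  rcases hf with ((⟨i, j, hij, hne, rfl⟩ | ⟨j, hj, rfl⟩) | hf)
  · rw [X_mul_X_eq]
    refine ⟨fun d hd => coeff_monomial_ne
      (fun heq => by rw [heq, deg_add, deg_single, deg_single] at hd; omega) 1, ?_, ?_⟩
    · apply coeff_monomial_ne
      intro heq
      obtain ⟨h1, h2⟩ := eq_of_single_add_single_eq_single_two heq.symm
      rw [h1, h2] at hij
      exact absurd hij (lt_irrefl _)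
    · rw [coeff_monomial_ne ?h1 1, coeff_monomial_ne ?h2 1, add_zero]
      case h1 =>
        intro heq
        obtain ⟨h1, h2⟩ := eq_of_single_add_single_eq_single_two heq.symm
        rw [h1, h2] at hij
        exact absurd hij (lt_irrefl _)
      case h2 =>
        intro heq
        have hi := mem01_of_single_add_single_eq heq.symm
        have hj2 := mem01_of_single_add_single_eq' heq.symm
        rcases hi with rfl | rfl <;> rcases hj2 with rfl | rfl
        · exact absurd hij (lt_irrefl _)
        · exact hne rfl
        · rw [Fin.lt_def, Fin.val_zero, Fin.val_one] at hij; omega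
        · exact absurd hij (lt_irrefl _)
  · have hj0 := fin_ne_zero_of_two_le hj
    have hj1 := fin_ne_one_of_two_le hj
    rw [X_pow_eq, X_pow_eq]
    apply sub_mem
    · refine ⟨fun d hd => coeff_monomial_ne
        (fun heq => by rw [heq, deg_single] at hd; omega) 1, ?_, ?_⟩
      · apply coeff_monomial_ne
        intro heq
        have := DFunLike.congr_fun heq 0
        rw [Finsupp.single_eq_same, Finsupp.single_eq_of_ne' hj0] at this
        omega
      · rw [coeff_monomial_ne ?h1 1, coeff_monomial_ne ?h2 1, add_zero]
        case h1 =>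
          intro heq
          have := DFunLike.congr_fun heq 1
          rw [Finsupp.single_eq_same, Finsupp.single_eq_of_ne' hj1] at this
          omega
        case h2 =>
          intro heq
          exact hj0 (eq_of_single_add_single_eq_single_two heq).1.symm
    · exact lowVanish_le_UA (monomial_mem_lowVanish (by rw [deg_single]; omega) 1)
  · simp only [Set.mem_insert_iff, Set.mem_singleton_iff] at hf
    rcases hf with rfl | rfl
    · have h01 : (0 : ℕ) + 1 = 1 := rfl
      rw [X_pow_eq, h01, X_pow_mul_X_eq]
      refine sub_mem ?m12 ?m3
      case m12 =>
        refine ⟨?_, ?_, ?_⟩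
        · intro d hd
          rw [map_sub,
            coeff_monomial_ne (fun heq => by rw [heq, deg_single] at hd; omega) 1,
            coeff_monomial_ne
              (fun heq => by rw [heq, deg_add, deg_single, deg_single] at hd; omega) 1,
            sub_zero]
        · rw [map_sub, coeff_monomial_ne single_two_ne 1,
            coeff_monomial_ne (fun heq =>
              fin_zero_ne_one (eq_of_single_add_single_eq_single_two heq.symm).2.symm) 1,
            sub_zero]
        · rw [map_sub, map_sub, coeff_monomial_same,
            coeff_monomial_ne (Ne.symm e01_ne_single_one_two) 1,
            coeff_monomial_ne e01_ne_single_one_two 1,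
            coeff_monomial_same]
          ring
      case m3 =>
        apply lowVanish_le_UA
        rw [X_pow_eq]
        exact Ideal.mul_mem_left _ w (monomial_mem_lowVanish (by rw [deg_single]; omega) 1)
    · rw [X_pow_mul_X_eq]
      exact lowVanish_le_UA (monomial_mem_lowVanish
        (by rw [deg_add, deg_single, deg_single]; omega) 1)

end Stmt10Aux

end Chunk5

noncomputable section Chunk6

namespace Stmt10Aux

open MvPowerSeries Finsupp Classical

variable {k : Type*} [Field k] {σ : Type*} {n : ℕ}

/-- The ideal generated by triple products of nonunits. -/
def Jq (A : Type*) [CommRing A] : Ideal A :=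
  Ideal.span {u | ∃ a b c : A, ¬IsUnit a ∧ ¬IsUnit b ∧ ¬IsUnit c ∧ u = a * b * c}

/-- The transportable property distinguishing the two quotient rings. -/
def Pprop (A : Type*) [CommRing A] : Prop :=
  ∃ x y : A, ¬IsUnit x ∧ ¬IsUnit y ∧ x * x ∈ Jq A ∧ x * y ∉ Jq A

lemma nonunit_map {A B : Type*} [CommRing A] [CommRing B] (e : A ≃+* B) {a : A}
    (ha : ¬IsUnit a) : ¬IsUnit (e a) := by
  intro h
  have := h.map (e.symm : B →+* A)
  rw [RingEquiv.coe_toRingHom, e.symm_apply_apply] at this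
  exact ha this

lemma Jq_map {A B : Type*} [CommRing A] [CommRing B] (e : A ≃+* B) :
    (Jq A).map (e : A →+* B) = Jq B := by
  rw [Jq, Jq, Ideal.map_span]
  congr 1
  ext u
  simp only [Set.mem_image, Set.mem_setOf_eq]
  constructor
  · rintro ⟨v, ⟨a, b, c, ha, hb, hc, rfl⟩, rfl⟩
    exact ⟨e a, e b, e c, nonunit_map e ha, nonunit_map e hb, nonunit_map e hc,
      by rw [RingEquiv.coe_toRingHom, map_mul, map_mul]⟩
  · rintro ⟨a, b, c, ha, hb, hc, rfl⟩
    refine ⟨e.symm a * e.symm b * e.symm c,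
      ⟨e.symm a, e.symm b, e.symm c, nonunit_map e.symm ha, nonunit_map e.symm hb,
        nonunit_map e.symm hc, rfl⟩, ?_⟩
    rw [RingEquiv.coe_toRingHom, map_mul, map_mul, e.apply_symm_apply, e.apply_symm_apply,
      e.apply_symm_apply]

lemma mem_Jq_iff {A B : Type*} [CommRing A] [CommRing B] (e : A ≃+* B) (x : A) :
    x ∈ Jq A ↔ e x ∈ Jq B := by
  constructor
  · intro hx
    rw [← Jq_map e]
    exact Ideal.mem_map_of_mem _ hx
  · intro hx
    have := Ideal.mem_map_of_mem (e.symm : B →+* A) hx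
    rw [Jq_map e.symm, RingEquiv.coe_toRingHom, e.symm_apply_apply] at this
    exact this

lemma Pprop_transport {A B : Type*} [CommRing A] [CommRing B] (e : A ≃+* B) :
    Pprop A → Pprop B := by
  rintro ⟨x, y, hx, hy, hxx, hxy⟩
  refine ⟨e x, e y, nonunit_map e hx, nonunit_map e hy, ?_, ?_⟩
  · rw [← map_mul]
    exact (mem_Jq_iff e _).1 hxx
  · rw [← map_mul]
    exact fun h => hxy ((mem_Jq_iff e _).2 h)

lemma isUnit_mk_iff {I : Ideal (MvPowerSeries σ k)} (hI : I ≤ lowVanish k σ 1)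
    (f : MvPowerSeries σ k) :
    IsUnit (Ideal.Quotient.mk I f) ↔ constantCoeff f ≠ 0 := by
  constructor
  · intro h hconst
    rcases isUnit_iff_exists_inv.1 h with ⟨v, hv⟩
    obtain ⟨g, rfl⟩ := Ideal.Quotient.mk_surjective v
    rw [← map_mul, ← map_one (Ideal.Quotient.mk I), Ideal.Quotient.eq] at hv
    have h0 : constantCoeff (f * g - 1) = 0 := by
      rw [← coeff_zero_eq_constantCoeff_apply]
      exact hI hv 0 (by rw [map_zero]; omega)
    rw [map_sub, map_mul, map_one, hconst, zero_mul] at h0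
    simp at h0
  · intro h
    exact (isUnit_iff_constantCoeff.2 (isUnit_iff_ne_zero.2 h)).map _

lemma Jq_quotient {I : Ideal (MvPowerSeries σ k)} (hI : I ≤ lowVanish k σ 1) :
    (JR k σ).map (Ideal.Quotient.mk I) = Jq (MvPowerSeries σ k ⧸ I) := by
  rw [JR, Jq, Ideal.map_span]
  congr 1
  ext u
  simp only [Set.mem_image, Set.mem_setOf_eq]
  constructor
  · rintro ⟨v, ⟨a, b, c, ha, hb, hc, rfl⟩, rfl⟩
    exact ⟨Ideal.Quotient.mk I a, Ideal.Quotient.mk I b, Ideal.Quotient.mk I c,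
      fun h => (isUnit_mk_iff hI a).1 h ha,
      fun h => (isUnit_mk_iff hI b).1 h hb,
      fun h => (isUnit_mk_iff hI c).1 h hc,
      by rw [map_mul, map_mul]⟩
  · rintro ⟨a, b, c, ha, hb, hc, rfl⟩
    obtain ⟨a', rfl⟩ := Ideal.Quotient.mk_surjective a
    obtain ⟨b', rfl⟩ := Ideal.Quotient.mk_surjective b
    obtain ⟨c', rfl⟩ := Ideal.Quotient.mk_surjective c
    have ha' : constantCoeff a' = 0 := by
      by_contra hc'; exact ha ((isUnit_mk_iff hI a').2 hc')
    have hb' : constantCoeff b' = 0 := by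
      by_contra hc'; exact hb ((isUnit_mk_iff hI b').2 hc')
    have hc' : constantCoeff c' = 0 := by
      by_contra hcc; exact hc ((isUnit_mk_iff hI c').2 hcc)
    exact ⟨a' * b' * c', ⟨a', b', c', ha', hb', hc', rfl⟩, by rw [map_mul, map_mul]⟩

lemma mem_Jq_quot_iff {I : Ideal (MvPowerSeries σ k)} (hI : I ≤ lowVanish k σ 1)
    (f : MvPowerSeries σ k) :
    Ideal.Quotient.mk I f ∈ Jq (MvPowerSeries σ k ⧸ I) ↔ f ∈ JR k σ ⊔ I := by
  constructor
  · intro hf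
    rw [← Jq_quotient hI] at hf
    have := Ideal.mem_comap.2 hf
    rw [Ideal.comap_map_of_surjective _ Ideal.Quotient.mk_surjective,
      ← RingHom.ker_eq_comap_bot, Ideal.mk_ker] at this
    exact this
  · intro hf
    rcases Submodule.mem_sup.1 hf with ⟨u, hu, v, hv, rfl⟩
    rw [map_add, Ideal.Quotient.eq_zero_iff_mem.2 hv, add_zero, ← Jq_quotient hI]
    exact Ideal.mem_map_of_mem _ hu

end Stmt10Aux

end Chunk6

noncomputable section Chunk7

namespace Stmt10Aux

open MvPowerSeries Finsupp Classical

variable {k : Type*} [Field k] {n : ℕ}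

lemma X0_pow_mem_JR {m : ℕ} (hm : 3 ≤ m) :
    (X 0 : MvPowerSeries (Fin (n + 2)) k) ^ m ∈ JR k (Fin (n + 2)) := by
  apply Ideal.subset_span
  refine ⟨X 0, X 0, X 0 ^ (m - 2), constantCoeff_X 0, constantCoeff_X 0, ?_, ?_⟩
  · rw [map_pow, constantCoeff_X, zero_pow (by omega : m - 2 ≠ 0)]
  · have h2 : m = 1 + 1 + (m - 2) := by omega
    conv_lhs => rw [h2]
    rw [pow_add, pow_add, pow_one]

lemma Pprop_B (s t p : ℕ) (hs3 : 3 ≤ s) (ht2 : 2 ≤ t) (hst : t + 2 ≤ s) (hp : 1 ≤ p)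
    (z : MvPowerSeries (Fin (n + 2)) k) :
    Pprop (MvPowerSeries (Fin (n + 2)) k ⧸ Ipz k n s t p z) := by
  have hle : Ipz k n s t p z ≤ UB k n := Ipz_le_UB s t p hs3 ht2 hst hp z
  have hI : Ipz k n s t p z ≤ lowVanish k (Fin (n + 2)) 1 :=
    fun f hf d hd => (hle hf).1 d (by omega)
  refine ⟨Ideal.Quotient.mk _ (X 1), Ideal.Quotient.mk _ (X 0), ?_, ?_, ?_, ?_⟩
  · exact fun h => (isUnit_mk_iff hI _).1 h (constantCoeff_X 1)
  · exact fun h => (isUnit_mk_iff hI _).1 h (constantCoeff_X 0)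
  · rw [← map_mul]
    apply (mem_Jq_quot_iff hI _).2
    have key : (X 1 : MvPowerSeries (Fin (n + 2)) k) * X 1 =
        (X 1 ^ 2 - X 0 ^ (p + 1) * X 1 - z * X 0 ^ (s - t + 1)) +
        (X 0 ^ (p + 1) * X 1 + z * X 0 ^ (s - t + 1)) := by ring
    rw [key]
    apply add_mem
    · apply Submodule.mem_sup_right
      rw [Ipz, Iy]
      exact Ideal.subset_span (Set.mem_union_right _ (Set.mem_insert _ _))
    · apply Submodule.mem_sup_left
      apply add_mem
      · apply Ideal.subset_span
        refine ⟨X 0, X 0, X 0 ^ (p - 1) * X 1, constantCoeff_X 0, constantCoeff_X 0, ?_, ?_⟩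
        · rw [map_mul, constantCoeff_X, mul_zero]
        · have : p + 1 = 1 + 1 + (p - 1) := by omega
          rw [this, pow_add, pow_add, pow_one]
          ring
      · apply Ideal.subset_span
        refine ⟨X 0, X 0, z * X 0 ^ (s - t - 1), constantCoeff_X 0, constantCoeff_X 0, ?_, ?_⟩
        · rw [map_mul, map_pow, constantCoeff_X, zero_pow (by omega : s - t - 1 ≠ 0), mul_zero]
        · have : s - t + 1 = 1 + 1 + (s - t - 1) := by omega
          rw [this, pow_add, pow_add, pow_one]
          ring
  · rw [← map_mul]
    intro hmem
    have hsup := (mem_Jq_quot_iff hI _).1 hmem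
    have hUB : (X 1 : MvPowerSeries (Fin (n + 2)) k) * X 0 ∈ UB k n := by
      refine (sup_le ?_ hle) hsup
      exact le_trans JR_le_lowVanish lowVanish_le_UB
    have h1 : coeff (Finsupp.single 0 1 + Finsupp.single 1 1)
        ((X 1 : MvPowerSeries (Fin (n + 2)) k) * X 0) = 1 := by
      rw [X_mul_X_eq, add_comm (Finsupp.single (1 : Fin (n + 2)) 1)]
      exact coeff_monomial_same _ _
    rw [hUB.2] at h1
    exact one_ne_zero h1.symm

lemma notPprop_A (s t : ℕ) (hs3 : 3 ≤ s) (ht2 : 2 ≤ t) (hst : t + 2 ≤ s)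
    (w : MvPowerSeries (Fin (n + 2)) k) :
    ¬ Pprop (MvPowerSeries (Fin (n + 2)) k ⧸ Ipz k n s t 0 w) := by
  rintro ⟨x, y, hx, hy, hxx, hxy⟩
  have hle : Ipz k n s t 0 w ≤ UA k n := Ipz_le_UA s t hs3 ht2 hst w
  have hI : Ipz k n s t 0 w ≤ lowVanish k (Fin (n + 2)) 1 :=
    fun f hf d hd => (hle hf).1 d (by omega)
  have hsupUA : JR k (Fin (n + 2)) ⊔ Ipz k n s t 0 w ≤ UA k n :=
    sup_le (le_trans JR_le_lowVanish lowVanish_le_UA) hle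
  obtain ⟨f, rfl⟩ := Ideal.Quotient.mk_surjective x
  obtain ⟨g, rfl⟩ := Ideal.Quotient.mk_surjective y
  have hf0 : constantCoeff f = 0 := by
    by_contra hc; exact hx ((isUnit_mk_iff hI f).2 hc)
  have hg0 : constantCoeff g = 0 := by
    by_contra hc; exact hy ((isUnit_mk_iff hI g).2 hc)
  rw [← map_mul] at hxx
  have hUA : f * f ∈ UA k n := hsupUA ((mem_Jq_quot_iff hI _).1 hxx)
  have ha0 : coeff (Finsupp.single 0 1) f = 0 := by
    have h2 := hUA.2.1
    rw [coeff_mul_sq 0 hf0 hf0] at h2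
    exact mul_self_eq_zero.1 h2
  have ha1 : coeff (Finsupp.single 1 1) f = 0 := by
    have h3 := hUA.2.2
    rw [coeff_mul_sq 1 hf0 hf0, coeff_mul_single_single fin_zero_ne_one hf0 hf0, ha0,
      zero_mul, mul_zero] at h3
    simp only [add_zero, zero_add] at h3
    exact mul_self_eq_zero.1 h3
  apply hxy
  rw [← map_mul]
  apply (mem_Jq_quot_iff hI _).2
  obtain ⟨ff, hffeq, hffc⟩ := decomp f hf0
  obtain ⟨gg, hggeq, hggc⟩ := decomp g hg0
  rw [show f * g = (∑ i : Fin (n + 2), X i * ff i) * g from by rw [← hffeq], Finset.sum_mul]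
  apply Ideal.sum_mem
  intro i _
  by_cases hival : (i : ℕ) < 2
  · have hconst : constantCoeff (ff i) = 0 := by
      rw [hffc]
      rcases (by omega : (i : ℕ) = 0 ∨ (i : ℕ) = 1) with h | h
      · have : i = 0 := Fin.ext (by rw [h, Fin.val_zero])
        rw [this]; exact ha0
      · have : i = 1 := Fin.ext (by rw [h, Fin.val_one])
        rw [this]; exact ha1
    apply Submodule.mem_sup_left
    exact Ideal.subset_span ⟨X i, ff i, g, constantCoeff_X i, hconst, hg0, rfl⟩
  · push_neg at hival
    rw [show X i * ff i * g = X i * ff i * (∑ j : Fin (n + 2), X j * gg j) from by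
      rw [← hggeq], Finset.mul_sum]
    apply Ideal.sum_mem
    intro j _
    have hrearr : (X i * ff i) * (X j * gg j) = (X i * X j) * (ff i * gg j) := by ring
    rw [hrearr]
    apply Ideal.mul_mem_right
    rcases eq_or_ne i j with rfl | hij
    · have hsplit : (X i : MvPowerSeries (Fin (n + 2)) k) * X i =
          (X i ^ 2 - X 0 ^ s) + X 0 ^ s := by ring
      rw [hsplit]
      apply add_mem
      · apply Submodule.mem_sup_right
        rw [Ipz, Iy]
        exact Ideal.subset_span (Set.mem_union_left _
          (Set.mem_union_right _ ⟨i, hival, rfl⟩))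
      · exact Submodule.mem_sup_left (X0_pow_mem_JR hs3)
    · apply Submodule.mem_sup_right
      rw [Ipz, Iy]
      rcases lt_or_gt_of_ne hij with hlt | hgt
      · apply Ideal.subset_span
        apply Set.mem_union_left
        apply Set.mem_union_left
        refine ⟨i, j, hlt, ?_, rfl⟩
        intro hpair
        have : i = 0 := (Prod.mk.injEq _ _ _ _ ▸ hpair).1
        rw [this, Fin.val_zero] at hival
        omega
      · rw [mul_comm (X i)]
        apply Ideal.subset_span
        apply Set.mem_union_left
        apply Set.mem_union_left
        refine ⟨j, i, hgt, ?_, rfl⟩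
        intro hpair
        have : i = 1 := (Prod.mk.injEq _ _ _ _ ▸ hpair).2
        rw [this, Fin.val_one] at hival
        omega

end Stmt10Aux

end Chunk7

open MvPowerSeries in
/-- If `s ≥ t + 2` and `p ≥ 1`, then for all invertible `z, w` the ideals `I_{0,w}` and
`I_{p,z}` are not isomorphic. -/
theorem stmt_10 {k : Type*} [Field k] [IsAlgClosed k] [CharZero k] (n s t : ℕ)
    (hst : t + 1 ≤ s) (ht : 3 ≤ t + 1) (hs2 : t + 2 ≤ s)
    (p : ℕ) (hp : 1 ≤ p)
    (z w : MvPowerSeries (Fin (n + 2)) k) (hz : IsUnit z) (hw : IsUnit w) :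
    ¬ IdealIso k (Ipz k n s t 0 w) (Ipz k n s t p z) := by
  intro hiso
  obtain ⟨e⟩ := hiso
  have ht2 : 2 ≤ t := by omega
  have hs3 : 3 ≤ s := by omega
  exact Stmt10Aux.notPprop_A s t hs3 ht2 hs2 w
    (Stmt10Aux.Pprop_transport e.symm.toRingEquiv
      (Stmt10Aux.Pprop_B s t p hs3 ht2 hs2 hp z))
end Stmt10Aux
end
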